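/- arXiv:1601.04679 — 6 statements merged into one kernel-verified Lean document; each statement's English description precedes it below -/
import Mathlib

section
/- For fixed positive reals t₁ ≤ t₂, the limit as n → ∞ of (1/(n log n)) · ∑_{k=1}^{⌊n t₁⌋} ∑_{ℓ=1}^{⌊n t₂⌋} 1/(|k-ℓ|+1) equals 2 t₁ = 2 min(t₁, t₂). -/
open Finset Filter

noncomputable def H (m : ℕ) : ℝ := ∑ i ∈ Finset.range m, (1:ℝ)/(i+1)

lemma H_nonneg (m : ℕ) : 0 ≤ H m := by
  unfold H; positivity

lemma H_mono : Monotone H := by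
  intro a b hab
  unfold H
  apply Finset.sum_le_sum_of_subset_of_nonneg (Finset.range_subset_range.2 hab)
  intros; positivity

lemma H_eq_harmonic (m : ℕ) : H m = (harmonic m : ℝ) := by
  unfold H harmonic
  push_cast
  simp [one_div]

lemma log_le_H (m : ℕ) : Real.log (m+1) ≤ H m := by
  rw [H_eq_harmonic]
  exact_mod_cast log_add_one_le_harmonic m

lemma H_le_log (m : ℕ) : H m ≤ 1 + Real.log m := by
  rw [H_eq_harmonic]
  exact_mod_cast harmonic_le_one_add_log m

lemma my_inner_sum (b k : ℕ) (hk1 : 1 ≤ k) (hkb : k ≤ b) :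
    ∑ ℓ ∈ Finset.Icc 1 b, (1:ℝ) / ((((k : ℤ) - ℓ).natAbs : ℝ) + 1)
      = H k + H (b + 1 - k) - 1 := by
  have hsplit : Finset.Icc 1 b = Finset.Icc 1 k ∪ Finset.Icc (k+1) b := by
    ext x; simp only [Finset.mem_Icc, Finset.mem_union]; omega
  have hdisj : Disjoint (Finset.Icc 1 k) (Finset.Icc (k+1) b) := by
    simp [Finset.disjoint_left]; omega
  rw [hsplit, Finset.sum_union hdisj]
  have h1 : ∑ ℓ ∈ Finset.Icc 1 k, (1:ℝ) / ((((k : ℤ) - ℓ).natAbs : ℝ) + 1) = H k := by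
    rw [show Finset.Icc 1 k = Finset.Ico 1 (k+1) by rfl, Finset.sum_Ico_eq_sum_range]
    have : ∀ i ∈ Finset.range (k + 1 - 1), (1:ℝ) / ((((k : ℤ) - ((1+i : ℕ) : ℤ)).natAbs : ℝ) + 1)
        = (1:ℝ)/(((k - 1 - i : ℕ):ℝ)+1) := by
      intro i hi
      simp only [Finset.mem_range] at hi
      have h : ((k : ℤ) - ((1+i : ℕ) : ℤ)).natAbs = k - 1 - i := by omega
      rw [h]
    rw [Finset.sum_congr rfl this]
    have := Finset.sum_range_reflect (fun i => (1:ℝ)/((i:ℝ)+1)) k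
    simpa [H, show k + 1 - 1 = k by omega] using this
  have h2 : ∑ ℓ ∈ Finset.Icc (k+1) b, (1:ℝ) / ((((k : ℤ) - ℓ).natAbs : ℝ) + 1)
      = H (b + 1 - k) - 1 := by
    rw [show Finset.Icc (k+1) b = Finset.Ico (k+1) (b+1) by rfl, Finset.sum_Ico_eq_sum_range]
    have : ∀ i ∈ Finset.range (b + 1 - (k+1)), (1:ℝ) / ((((k : ℤ) - ((k+1+i : ℕ) : ℤ)).natAbs : ℝ) + 1)
        = (1:ℝ)/(((i+1 : ℕ):ℝ)+1) := by
      intro i hi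
      have h : ((k : ℤ) - ((k+1+i : ℕ) : ℤ)).natAbs = i + 1 := by omega
      rw [h]
    rw [Finset.sum_congr rfl this]
    have key : H (b + 1 - k) = (1:ℝ)/(0+1) + ∑ i ∈ Finset.range (b - k), (1:ℝ)/(((i+1:ℕ):ℝ)+1) := by
      have hbk : b + 1 - k = (b - k) + 1 := by omega
      rw [hbk]
      unfold H
      rw [Finset.sum_range_succ']
      rw [add_comm]
      push_cast
      ring_nf
    rw [show b + 1 - (k+1) = b - k by omega]
    rw [key]
    push_cast
    ring
  rw [h1, h2]
  ring

lemma sum_H (a : ℕ) : ∑ k ∈ Finset.Icc 1 a, H k = (a+1) * H a - a := by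
  induction a with
  | zero => simp [H]
  | succ a ih =>
    rw [← Finset.insert_Icc_right_eq_Icc_add_one (by omega)]
    rw [Finset.sum_insert (by simp)]
    rw [ih]
    have hH : H (a+1) = H a + 1/((a:ℝ)+1) := by
      unfold H; rw [Finset.sum_range_succ]
    rw [hH]
    have : ((a:ℝ)+1) ≠ 0 := by positivity
    push_cast
    field_simp
    ring

lemma sum_reflect_H (a : ℕ) :
    ∑ k ∈ Finset.Icc 1 a, H (a + 1 - k) = ∑ k ∈ Finset.Icc 1 a, H k := by
  rw [show Finset.Icc 1 a = Finset.Ico 1 (a+1) by rfl]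
  rw [Finset.sum_Ico_eq_sum_range, Finset.sum_Ico_eq_sum_range]
  rw [show a + 1 - 1 = a by omega]
  have h1 : ∀ i ∈ Finset.range a, H (a + 1 - (1 + i)) = H (1 + (a - 1 - i)) := by
    intro i hi
    simp only [Finset.mem_range] at hi
    congr 1
    omega
  rw [Finset.sum_congr rfl h1]
  exact Finset.sum_range_reflect (fun i => H (1 + i)) a

lemma S_upper (a b : ℕ) (ha : 1 ≤ a) (hab : a ≤ b) :
    ∑ k ∈ Finset.Icc 1 a, ∑ ℓ ∈ Finset.Icc 1 b, (1:ℝ)/((((k:ℤ)-ℓ).natAbs:ℝ)+1)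
      ≤ 2 * a * H b := by
  have hcongr : ∀ k ∈ Finset.Icc 1 a,
      ∑ ℓ ∈ Finset.Icc 1 b, (1:ℝ)/((((k:ℤ)-ℓ).natAbs:ℝ)+1) = H k + H (b + 1 - k) - 1 := by
    intro k hk
    simp only [Finset.mem_Icc] at hk
    exact my_inner_sum b k hk.1 (le_trans hk.2 hab)
  rw [Finset.sum_congr rfl hcongr]
  have hle : ∀ k ∈ Finset.Icc 1 a, H k + H (b + 1 - k) - 1 ≤ 2 * H b := by
    intro k hk
    simp only [Finset.mem_Icc] at hk
    have h1 : H k ≤ H b := H_mono (le_trans hk.2 hab)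
    have h2 : H (b + 1 - k) ≤ H b := H_mono (by omega)
    linarith
  calc ∑ k ∈ Finset.Icc 1 a, (H k + H (b + 1 - k) - 1) ≤ ∑ _k ∈ Finset.Icc 1 a, 2 * H b :=
        Finset.sum_le_sum hle
    _ = 2 * a * H b := by
        rw [Finset.sum_const, Nat.card_Icc]
        simp only [nsmul_eq_mul]
        rw [show a + 1 - 1 = a by omega]
        ring

lemma S_lower (a b : ℕ) (hab : a ≤ b) :
    2 * (((a:ℝ)+1) * H a - a) - a
      ≤ ∑ k ∈ Finset.Icc 1 a, ∑ ℓ ∈ Finset.Icc 1 b, (1:ℝ)/((((k:ℤ)-ℓ).natAbs:ℝ)+1) := by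
  have hcongr : ∀ k ∈ Finset.Icc 1 a,
      ∑ ℓ ∈ Finset.Icc 1 b, (1:ℝ)/((((k:ℤ)-ℓ).natAbs:ℝ)+1) = H k + H (b + 1 - k) - 1 := by
    intro k hk
    simp only [Finset.mem_Icc] at hk
    exact my_inner_sum b k hk.1 (le_trans hk.2 hab)
  rw [Finset.sum_congr rfl hcongr]
  have hge : ∀ k ∈ Finset.Icc 1 a, H k + H (a + 1 - k) - 1 ≤ H k + H (b + 1 - k) - 1 := by
    intro k hk
    have : H (a + 1 - k) ≤ H (b + 1 - k) := H_mono (by omega)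
    linarith
  refine le_trans ?_ (Finset.sum_le_sum hge)
  have expand : ∑ k ∈ Finset.Icc 1 a, (H k + H (a + 1 - k) - 1)
      = (∑ k ∈ Finset.Icc 1 a, H k) + (∑ k ∈ Finset.Icc 1 a, H (a + 1 - k)) - a := by
    rw [Finset.sum_sub_distrib, Finset.sum_add_distrib, Finset.sum_const, Nat.card_Icc]
    simp only [nsmul_eq_mul]
    rw [show a + 1 - 1 = a by omega]
    ring
  rw [expand, sum_reflect_H, sum_H]
  linarith

theorem double_sum_reciprocal_limit (t₁ t₂ : ℝ) (ht₁ : 0 < t₁) (h12 : t₁ ≤ t₂) :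
    Tendsto (fun n : ℕ =>
      (1 / (n * Real.log n)) *
        ∑ k ∈ Finset.Icc 1 ⌊(n : ℝ) * t₁⌋₊, ∑ ℓ ∈ Finset.Icc 1 ⌊(n : ℝ) * t₂⌋₊,
          (1 : ℝ) / ((((k : ℤ) - ℓ).natAbs : ℝ) + 1))
      atTop (nhds (2 * t₁)) := by
  have ht₂ : 0 < t₂ := lt_of_lt_of_le ht₁ h12
  have hA : Tendsto (fun n : ℕ => (⌊(n:ℝ) * t₁⌋₊ : ℝ) / n) atTop (nhds t₁) := by
    have := (tendsto_nat_floor_mul_div_atTop (le_of_lt ht₁)).comp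
      (tendsto_natCast_atTop_atTop (R := ℝ))
    simpa [Function.comp_def, mul_comm] using this
  have hlog : Tendsto (fun n : ℕ => Real.log n) atTop atTop :=
    Real.tendsto_log_atTop.comp tendsto_natCast_atTop_atTop
  have hc : ∀ c : ℝ, Tendsto (fun n : ℕ => c / Real.log n) atTop (nhds 0) := fun c =>
    Filter.Tendsto.div_atTop tendsto_const_nhds hlog
  have h2t : (2:ℝ) * t₁ = t₁ * (2 + 0) := by ring
  rw [h2t]
  have hg : Tendsto (fun n : ℕ => ((⌊(n:ℝ)*t₁⌋₊:ℝ)/n) * (2 + (2*Real.log t₁ - 3)/Real.log n))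
      atTop (nhds (t₁ * (2 + 0))) :=
    hA.mul (tendsto_const_nhds.add (hc (2*Real.log t₁ - 3)))
  have hh : Tendsto (fun n : ℕ => ((⌊(n:ℝ)*t₁⌋₊:ℝ)/n) * (2 + (2*(1+Real.log t₂))/Real.log n))
      atTop (nhds (t₁ * (2 + 0))) :=
    hA.mul (tendsto_const_nhds.add (hc (2*(1+Real.log t₂))))
  refine tendsto_of_tendsto_of_tendsto_of_le_of_le' hg hh ?_ ?_
  · -- lower bound eventually
    have hev : ∀ᶠ n : ℕ in atTop, 1 ≤ ⌊t₁ * (n:ℝ)⌋₊ :=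
      (tendsto_nat_floor_mul_atTop t₁ ht₁).eventually_ge_atTop 1
    filter_upwards [eventually_ge_atTop 2, hev] with n hn2 hfl
    rw [mul_comm] at hfl
    set A := ⌊(n:ℝ)*t₁⌋₊ with hAdef
    set B := ⌊(n:ℝ)*t₂⌋₊ with hBdef
    have hnR : (2:ℝ) ≤ n := by exact_mod_cast hn2
    have npos : (0:ℝ) < n := by linarith
    have Lpos : 0 < Real.log n := Real.log_pos (by linarith)
    have hAB : A ≤ B := Nat.floor_mono (by nlinarith)
    have hAle : (A:ℝ) ≤ (n:ℝ)*t₁ := Nat.floor_le (by positivity)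
    have hnt1 : (1:ℝ) ≤ (n:ℝ)*t₁ := by
      have : (1:ℝ) ≤ (A:ℝ) := by exact_mod_cast hfl
      linarith
    have hlsum : Real.log ((n:ℝ)*t₁) = Real.log n + Real.log t₁ :=
      Real.log_mul (ne_of_gt npos) (ne_of_gt ht₁)
    have hls_nonneg : 0 ≤ Real.log n + Real.log t₁ := by
      rw [← hlsum]; exact Real.log_nonneg hnt1
    have hHA : Real.log n + Real.log t₁ ≤ H A := by
      have h5 : (n:ℝ)*t₁ ≤ (A:ℝ)+1 := le_of_lt (Nat.lt_floor_add_one _)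
      have h6 : Real.log ((n:ℝ)*t₁) ≤ Real.log ((A:ℝ)+1) :=
        Real.log_le_log (by positivity) h5
      have h7 := log_le_H A
      rw [hlsum] at h6
      linarith
    have hSlow := S_lower A B hAB
    have hstep : (A:ℝ) * (2*Real.log n + (2*Real.log t₁ - 3))
        ≤ 2 * (((A:ℝ)+1) * H A - A) - A := by
      have hApos : (0:ℝ) ≤ (A:ℝ) := Nat.cast_nonneg A
      have hHpos : 0 ≤ H A := H_nonneg A
      nlinarith
    have key : ((⌊(n:ℝ)*t₁⌋₊:ℝ)/n) * (2 + (2*Real.log t₁ - 3)/Real.log n)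
        = (1 / ((n:ℝ) * Real.log n)) * ((A:ℝ) * (2*Real.log n + (2*Real.log t₁ - 3))) := by
      rw [← hAdef]
      field_simp
    rw [key]
    have hmul : (0:ℝ) ≤ 1 / ((n:ℝ) * Real.log n) := by positivity
    calc (1 / ((n:ℝ) * Real.log n)) * ((A:ℝ) * (2*Real.log n + (2*Real.log t₁ - 3)))
        ≤ (1 / ((n:ℝ) * Real.log n)) * (2 * (((A:ℝ)+1) * H A - A) - A) :=
          mul_le_mul_of_nonneg_left hstep hmul
      _ ≤ _ := mul_le_mul_of_nonneg_left hSlow hmul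
  · -- upper bound eventually
    have hev : ∀ᶠ n : ℕ in atTop, 1 ≤ ⌊t₁ * (n:ℝ)⌋₊ :=
      (tendsto_nat_floor_mul_atTop t₁ ht₁).eventually_ge_atTop 1
    filter_upwards [eventually_ge_atTop 2, hev] with n hn2 hfl
    rw [mul_comm] at hfl
    set A := ⌊(n:ℝ)*t₁⌋₊ with hAdef
    set B := ⌊(n:ℝ)*t₂⌋₊ with hBdef
    have hnR : (2:ℝ) ≤ n := by exact_mod_cast hn2
    have npos : (0:ℝ) < n := by linarith
    have Lpos : 0 < Real.log n := Real.log_pos (by linarith)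
    have hAB : A ≤ B := Nat.floor_mono (by nlinarith)
    have hB1 : (1:ℝ) ≤ (B:ℝ) := by exact_mod_cast le_trans hfl hAB
    have hBle : (B:ℝ) ≤ (n:ℝ)*t₂ := Nat.floor_le (by positivity)
    have hHB : H B ≤ 1 + Real.log n + Real.log t₂ := by
      have h6 : Real.log (B:ℝ) ≤ Real.log ((n:ℝ)*t₂) :=
        Real.log_le_log (by linarith) hBle
      have h7 := H_le_log B
      rw [Real.log_mul (ne_of_gt npos) (ne_of_gt ht₂)] at h6
      linarith
    have hSup := S_upper A B hfl hAB
    have hstep : 2 * (A:ℝ) * H B ≤ (A:ℝ) * (2*Real.log n + 2*(1+Real.log t₂)) := by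
      have hApos : (0:ℝ) ≤ (A:ℝ) := Nat.cast_nonneg A
      nlinarith
    have key : ((⌊(n:ℝ)*t₁⌋₊:ℝ)/n) * (2 + (2*(1+Real.log t₂))/Real.log n)
        = (1 / ((n:ℝ) * Real.log n)) * ((A:ℝ) * (2*Real.log n + 2*(1+Real.log t₂))) := by
      rw [← hAdef]
      field_simp
    rw [key]
    have hmul : (0:ℝ) ≤ 1 / ((n:ℝ) * Real.log n) := by positivity
    calc (1 / ((n:ℝ) * Real.log n)) * ∑ k ∈ Finset.Icc 1 A, ∑ ℓ ∈ Finset.Icc 1 B,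
          (1 : ℝ) / ((((k : ℤ) - ℓ).natAbs : ℝ) + 1)
        ≤ (1 / ((n:ℝ) * Real.log n)) * (2 * (A:ℝ) * H B) :=
          mul_le_mul_of_nonneg_left hSup hmul
      _ ≤ (1 / ((n:ℝ) * Real.log n)) * ((A:ℝ) * (2*Real.log n + 2*(1+Real.log t₂))) :=
          mul_le_mul_of_nonneg_left hstep hmul
end

section
/- For fixed positive reals t₁, t₂, the limit as n → ∞ of (1/(n log n)) · ∫_0^1 ∑_{k=1}^{⌊n t₁⌋} ∑_{ℓ=1}^{⌊n t₂⌋} a^{|k-ℓ|} da equals 2 min(t₁, t₂). -/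
open Finset Filter MeasureTheory

noncomputable def hsum (j : ℕ) : ℝ := ∑ i ∈ Finset.range j, (1:ℝ)/(i+1)

lemma hsum_eq (j : ℕ) : hsum j = (harmonic j : ℝ) := by
  simp only [hsum, harmonic, Rat.cast_sum, Rat.cast_inv, Rat.cast_natCast]
  push_cast
  simp [one_div]

lemma hsum_le (j : ℕ) : hsum j ≤ 1 + Real.log j := by
  rw [hsum_eq]; exact harmonic_le_one_add_log j

lemma le_hsum (j : ℕ) : Real.log (j+1) ≤ hsum j := by
  rw [hsum_eq]
  have := log_add_one_le_harmonic j
  push_cast at this ⊢; exact this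

lemma hsum_mono : Monotone hsum := by
  intro a b hab
  exact Finset.sum_le_sum_of_subset_of_nonneg (Finset.range_subset_range.2 hab)
    (fun i _ _ => by positivity)

lemma inner_eq (k M : ℕ) (hk1 : 1 ≤ k) (hkM : k ≤ M) :
    ∑ ℓ ∈ Finset.Icc 1 M, (1:ℝ)/((((k : ℤ) - ℓ).natAbs : ℝ) + 1)
      = hsum k + hsum (M - k + 1) - 1 := by
  have hsplit : Finset.Icc 1 M = Finset.Ioc 0 k ∪ Finset.Ioc k M := by
    rw [Finset.Ioc_union_Ioc_eq_Ioc (Nat.zero_le k) hkM]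
    rw [← Finset.Icc_add_one_left_eq_Ioc, zero_add]
  rw [hsplit, Finset.sum_union (by
    simp [Finset.disjoint_left, Finset.mem_Ioc]
    omega)]
  have h1 : ∑ ℓ ∈ Finset.Ioc 0 k, (1:ℝ)/((((k : ℤ) - ℓ).natAbs : ℝ) + 1) = hsum k := by
    rw [hsum]
    apply Finset.sum_nbij' (fun ℓ => k - ℓ) (fun i => k - i)
    · intro a ha; simp at ha ⊢; omega
    · intro a ha; simp at ha ⊢; omega
    · intro a ha; simp at ha ⊢; omega
    · intro a ha; simp at ha ⊢; omega
    · intro a ha; simp at ha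
      have : ((k : ℤ) - a).natAbs = k - a := by omega
      rw [this]
  have h2 : ∑ ℓ ∈ Finset.Ioc k M, (1:ℝ)/((((k : ℤ) - ℓ).natAbs : ℝ) + 1)
      = hsum (M - k + 1) - 1 := by
    have : hsum (M - k + 1) = ∑ i ∈ Finset.range (M - k), (1:ℝ)/(i+1+1) + 1 := by
      rw [hsum, Finset.sum_range_succ']
      push_cast; norm_num
    rw [this]
    have h3 : ∑ ℓ ∈ Finset.Ioc k M, (1:ℝ)/((((k : ℤ) - ℓ).natAbs : ℝ) + 1)
        = ∑ i ∈ Finset.range (M - k), (1:ℝ)/(i+1+1) := by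
      apply Finset.sum_nbij' (fun ℓ => ℓ - k - 1) (fun i => i + k + 1)
      · intro a ha; simp at ha ⊢; omega
      · intro a ha; simp at ha ⊢; omega
      · intro a ha; simp at ha ⊢; omega
      · intro a ha; simp at ha ⊢; omega
      · intro a ha; simp at ha
        have : ((k : ℤ) - a).natAbs = a - k := by omega
        rw [this]
        congr 1
        have hx : a - k - 1 = a - (k+1) := by omega
        rw [hx]
        push_cast [Nat.cast_sub (by omega : k + 1 ≤ a), Nat.cast_sub (le_of_lt ha.1)]
        ring
    rw [h3]; ring
  rw [h1, h2]; ring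

lemma sum_log_ge (m : ℕ) :
    (m : ℝ) * Real.log m - m ≤ ∑ k ∈ Finset.Icc 1 m, Real.log k := by
  induction m with
  | zero => simp
  | succ m ih =>
    rw [← Finset.Ico_add_one_right_eq_Icc, Finset.sum_Ico_succ_top (by omega), Finset.Ico_add_one_right_eq_Icc]
    have key : ((m:ℝ)+1) * Real.log (m+1) - (m+1) - Real.log (m+1)
        ≤ (m:ℝ) * Real.log m - m := by
      rcases Nat.eq_zero_or_pos m with hm | hm
      · subst hm; simp
      · have hmpos : (0:ℝ) < m := by positivity
        have hlog : Real.log ((m+1)/m) ≤ (m+1)/(m:ℝ) - 1 :=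
          Real.log_le_sub_one_of_pos (by positivity)
        rw [Real.log_div (by positivity) (by positivity)] at hlog
        have : (m:ℝ) * (Real.log (m+1) - Real.log m) ≤ 1 := by
          rw [div_sub_one hmpos.ne'] at hlog
          calc (m:ℝ) * (Real.log (m+1) - Real.log m) ≤ (m:ℝ) * (((m:ℝ)+1-m)/m) := by
                exact mul_le_mul_of_nonneg_left hlog hmpos.le
            _ = 1 := by field_simp; ring
        nlinarith [this]
    push_cast
    linarith

lemma reflect_sum (m : ℕ) :
    ∑ k ∈ Finset.Icc 1 m, hsum (m - k + 1) = ∑ k ∈ Finset.Icc 1 m, hsum k := by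
  apply Finset.sum_nbij' (fun k => m + 1 - k) (fun k => m + 1 - k)
  · intro a ha; simp at ha ⊢; omega
  · intro a ha; simp at ha ⊢; omega
  · intro a ha; simp at ha ⊢; omega
  · intro a ha; simp at ha ⊢; omega
  · intro a ha; simp at ha; congr 1; omega

lemma T_upper (m M : ℕ) (hm : 1 ≤ m) (hmM : m ≤ M) :
    ∑ k ∈ Finset.Icc 1 m, ∑ ℓ ∈ Finset.Icc 1 M, (1:ℝ)/((((k : ℤ) - ℓ).natAbs : ℝ) + 1)
      ≤ m * (1 + 2 * Real.log M) := by
  have hT : ∀ k ∈ Finset.Icc 1 m,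
      ∑ ℓ ∈ Finset.Icc 1 M, (1:ℝ)/((((k : ℤ) - ℓ).natAbs : ℝ) + 1)
        = hsum k + hsum (M - k + 1) - 1 := by
    intro k hk; simp at hk; exact inner_eq k M hk.1 (hk.2.trans hmM)
  rw [Finset.sum_congr rfl hT]
  have : ∀ k ∈ Finset.Icc 1 m, hsum k + hsum (M - k + 1) - 1
      ≤ 1 + 2 * Real.log M := by
    intro k hk
    simp at hk
    have h1 : hsum k ≤ 1 + Real.log M := by
      refine (hsum_le k).trans (by
        have : Real.log k ≤ Real.log M := by
          apply Real.log_le_log (Nat.cast_pos.mpr hk.1)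
          exact_mod_cast (hk.2.trans hmM)
        linarith)
    have h2 : hsum (M - k + 1) ≤ 1 + Real.log M := by
      refine (hsum_le _).trans (by
        have : Real.log (M - k + 1 : ℕ) ≤ Real.log M := by
          apply Real.log_le_log (Nat.cast_pos.mpr (by omega))
          have : M - k + 1 ≤ M := by omega
          exact_mod_cast this
        linarith)
    linarith
  calc _ ≤ ∑ k ∈ Finset.Icc 1 m, (1 + 2 * Real.log M) := Finset.sum_le_sum this
    _ = m * (1 + 2 * Real.log M) := by
        rw [Finset.sum_const, Nat.card_Icc]; simp; ring

lemma T_lower (m M : ℕ) (hm : 1 ≤ m) (hmM : m ≤ M) :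
    2 * ((m:ℝ) * Real.log m - m) - m
      ≤ ∑ k ∈ Finset.Icc 1 m, ∑ ℓ ∈ Finset.Icc 1 M, (1:ℝ)/((((k : ℤ) - ℓ).natAbs : ℝ) + 1) := by
  have hT : ∀ k ∈ Finset.Icc 1 m,
      ∑ ℓ ∈ Finset.Icc 1 M, (1:ℝ)/((((k : ℤ) - ℓ).natAbs : ℝ) + 1)
        = hsum k + hsum (M - k + 1) - 1 := by
    intro k hk; simp at hk; exact inner_eq k M hk.1 (hk.2.trans hmM)
  rw [Finset.sum_congr rfl hT]
  have key : ∑ k ∈ Finset.Icc 1 m, (hsum k + hsum (M - k + 1) - 1)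
      = ∑ k ∈ Finset.Icc 1 m, hsum k + ∑ k ∈ Finset.Icc 1 m, hsum (M - k + 1) - m := by
    rw [Finset.sum_sub_distrib, Finset.sum_add_distrib]
    simp [Nat.card_Icc]
  rw [key]
  have h1 : ∑ k ∈ Finset.Icc 1 m, Real.log k ≤ ∑ k ∈ Finset.Icc 1 m, hsum k := by
    apply Finset.sum_le_sum
    intro k hk
    refine le_trans ?_ (le_hsum k)
    apply Real.log_le_log
    · simp at hk; exact_mod_cast hk.1
    · linarith
  have h2 : ∑ k ∈ Finset.Icc 1 m, Real.log k ≤ ∑ k ∈ Finset.Icc 1 m, hsum (M - k + 1) := by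
    refine le_trans ?_ (Finset.sum_le_sum (fun k _ => hsum_mono (by omega : m - k + 1 ≤ M - k + 1)))
    rw [reflect_sum]
    exact h1
  have h3 := sum_log_ge m
  linarith

lemma int_pow (j : ℕ) : ∫ a in Set.Icc (0:ℝ) 1, a ^ j = 1/((j:ℝ)+1) := by
  rw [MeasureTheory.integral_Icc_eq_integral_Ioc, ← intervalIntegral.integral_of_le zero_le_one,
    integral_pow]
  simp

lemma integral_eq (m M : ℕ) :
    ∫ a in Set.Icc (0:ℝ) 1, ∑ k ∈ Finset.Icc 1 m, ∑ ℓ ∈ Finset.Icc 1 M,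
        a ^ (((k : ℤ) - ℓ).natAbs)
      = ∑ k ∈ Finset.Icc 1 m, ∑ ℓ ∈ Finset.Icc 1 M,
          (1:ℝ)/((((k : ℤ) - ℓ).natAbs : ℝ) + 1) := by
  rw [MeasureTheory.integral_finset_sum _ (fun k _ =>
    (Continuous.integrableOn_Icc (by continuity)))]
  refine Finset.sum_congr rfl (fun k _ => ?_)
  rw [MeasureTheory.integral_finset_sum _ (fun ℓ _ =>
    (Continuous.integrableOn_Icc (by continuity)))]
  exact Finset.sum_congr rfl (fun ℓ _ => int_pow _)

lemma floor_div_tendsto (t : ℝ) (ht : 0 < t) :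
    Tendsto (fun n : ℕ => ((⌊(n:ℝ) * t⌋₊ : ℝ))/n) atTop (nhds t) := by
  have h := (tendsto_nat_floor_mul_div_atTop (le_of_lt ht)).comp
    (tendsto_natCast_atTop_atTop (R := ℝ))
  exact h.congr (fun n => by simp [Function.comp, mul_comm])

lemma floor_eventually_ge (t : ℝ) (ht : 0 < t) :
    ∀ᶠ n : ℕ in atTop, 1 ≤ ⌊(n:ℝ) * t⌋₊ := by
  have := (tendsto_nat_floor_mul_atTop t ht).eventually_ge_atTop 1
  exact this.mono (fun n h => by rwa [mul_comm] at h)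

theorem aux_limit (t₁ t₂ : ℝ) (ht₁ : 0 < t₁) (ht₂ : 0 < t₂) (h12 : t₁ ≤ t₂) :
    Tendsto (fun n : ℕ =>
      (1 / (n * Real.log n)) *
        ∫ a in Set.Icc (0 : ℝ) 1,
          ∑ k ∈ Finset.Icc 1 ⌊(n : ℝ) * t₁⌋₊, ∑ ℓ ∈ Finset.Icc 1 ⌊(n : ℝ) * t₂⌋₊,
            a ^ (((k : ℤ) - ℓ).natAbs))
      atTop (nhds (2 * t₁)) := by
  have hA1 := floor_div_tendsto t₁ ht₁
  have hA2 := floor_div_tendsto t₂ ht₂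
  have hB1 : Tendsto (fun n : ℕ => Real.log ((⌊(n:ℝ) * t₁⌋₊ : ℝ)/n)) atTop (nhds (Real.log t₁)) :=
    ((Real.continuousAt_log ht₁.ne').tendsto).comp hA1
  have hB2 : Tendsto (fun n : ℕ => Real.log ((⌊(n:ℝ) * t₂⌋₊ : ℝ)/n)) atTop (nhds (Real.log t₂)) :=
    ((Real.continuousAt_log ht₂.ne').tendsto).comp hA2
  have hC : Tendsto (fun n : ℕ => (Real.log n)⁻¹) atTop (nhds 0) :=
    (Real.tendsto_log_atTop.comp tendsto_natCast_atTop_atTop).inv_tendsto_atTop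
  set lowerf : ℕ → ℝ := fun n =>
    2 * (((⌊(n:ℝ) * t₁⌋₊ : ℝ)/n) * (Real.log ((⌊(n:ℝ) * t₁⌋₊ : ℝ)/n) * (Real.log n)⁻¹ + 1))
      - 3 * (((⌊(n:ℝ) * t₁⌋₊ : ℝ)/n) * (Real.log n)⁻¹) with hlowerf
  set upperf : ℕ → ℝ := fun n =>
    ((⌊(n:ℝ) * t₁⌋₊ : ℝ)/n) * (Real.log n)⁻¹
      + 2 * (((⌊(n:ℝ) * t₁⌋₊ : ℝ)/n) * (Real.log ((⌊(n:ℝ) * t₂⌋₊ : ℝ)/n) * (Real.log n)⁻¹ + 1))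
    with hupperf
  have hl : Tendsto lowerf atTop (nhds (2 * (t₁ * (Real.log t₁ * 0 + 1)) - 3 * (t₁ * 0))) := by
    apply Tendsto.sub
    · exact ((hA1.mul ((hB1.mul hC).add tendsto_const_nhds))).const_mul 2
    · exact (hA1.mul hC).const_mul 3
  have hu : Tendsto upperf atTop
      (nhds (t₁ * 0 + 2 * (t₁ * (Real.log t₂ * 0 + 1)))) := by
    apply Tendsto.add
    · exact hA1.mul hC
    · exact ((hA1.mul ((hB2.mul hC).add tendsto_const_nhds))).const_mul 2
  rw [show 2 * (t₁ * (Real.log t₁ * 0 + 1)) - 3 * (t₁ * 0) = 2 * t₁ by ring] at hl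
  rw [show t₁ * 0 + 2 * (t₁ * (Real.log t₂ * 0 + 1)) = 2 * t₁ by ring] at hu
  apply tendsto_of_tendsto_of_tendsto_of_le_of_le' hl hu
  · -- lowerf ≤ f eventually
    filter_upwards [eventually_ge_atTop 2, floor_eventually_ge t₁ ht₁] with n hn2 hm1
    set m := ⌊(n:ℝ) * t₁⌋₊
    set M := ⌊(n:ℝ) * t₂⌋₊
    have hmM : m ≤ M := Nat.floor_le_floor (by nlinarith [Nat.cast_nonneg (α := ℝ) n])
    have hn0 : (0:ℝ) < n := by positivity
    have hlogn : 0 < Real.log n := Real.log_pos (by exact_mod_cast hn2)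
    have hm0 : (0:ℝ) < m := Nat.cast_pos.mpr hm1
    rw [integral_eq]
    have heq : lowerf n = (1 / ((n:ℝ) * Real.log n)) * (2 * ((m:ℝ) * Real.log m - m) - m) := by
      rw [hlowerf]
      have hlogm : Real.log ((m:ℝ)/n) = Real.log m - Real.log n :=
        Real.log_div hm0.ne' hn0.ne'
      simp only []
      rw [hlogm]
      field_simp
      ring
    rw [heq]
    exact mul_le_mul_of_nonneg_left (T_lower m M hm1 hmM) (by positivity)
  · -- f ≤ upperf eventually
    filter_upwards [eventually_ge_atTop 2, floor_eventually_ge t₁ ht₁,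
      floor_eventually_ge t₂ ht₂] with n hn2 hm1 hM1
    set m := ⌊(n:ℝ) * t₁⌋₊
    set M := ⌊(n:ℝ) * t₂⌋₊
    have hmM : m ≤ M := Nat.floor_le_floor (by nlinarith [Nat.cast_nonneg (α := ℝ) n])
    have hn0 : (0:ℝ) < n := by positivity
    have hlogn : 0 < Real.log n := Real.log_pos (by exact_mod_cast hn2)
    have hM0 : (0:ℝ) < M := Nat.cast_pos.mpr hM1
    rw [integral_eq]
    have heq : upperf n = (1 / ((n:ℝ) * Real.log n)) * ((m:ℝ) * (1 + 2 * Real.log M)) := by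
      rw [hupperf]
      have hlogM : Real.log ((M:ℝ)/n) = Real.log M - Real.log n :=
        Real.log_div hM0.ne' hn0.ne'
      simp only []
      rw [hlogM]
      field_simp
      ring
    rw [heq]
    exact mul_le_mul_of_nonneg_left (T_upper m M hm1 hmM) (by positivity)

theorem integral_double_sum_pow_limit (t₁ t₂ : ℝ) (ht₁ : 0 < t₁) (ht₂ : 0 < t₂) :
    Tendsto (fun n : ℕ =>
      (1 / (n * Real.log n)) *
        ∫ a in Set.Icc (0 : ℝ) 1,
          ∑ k ∈ Finset.Icc 1 ⌊(n : ℝ) * t₁⌋₊, ∑ ℓ ∈ Finset.Icc 1 ⌊(n : ℝ) * t₂⌋₊,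
            a ^ (((k : ℤ) - ℓ).natAbs))
      atTop (nhds (2 * min t₁ t₂)) := by
  rcases le_total t₁ t₂ with h | h
  · rw [min_eq_left h]
    exact aux_limit t₁ t₂ ht₁ ht₂ h
  · rw [min_eq_right h]
    have := aux_limit t₂ t₁ ht₂ ht₁ h
    refine this.congr (fun n => ?_)
    congr 1
    have : (fun a : ℝ => ∑ k ∈ Finset.Icc 1 ⌊(n : ℝ) * t₂⌋₊, ∑ ℓ ∈ Finset.Icc 1 ⌊(n : ℝ) * t₁⌋₊,
        a ^ (((k : ℤ) - ℓ).natAbs))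
        = (fun a : ℝ => ∑ k ∈ Finset.Icc 1 ⌊(n : ℝ) * t₁⌋₊, ∑ ℓ ∈ Finset.Icc 1 ⌊(n : ℝ) * t₂⌋₊,
        a ^ (((k : ℤ) - ℓ).natAbs)) := by
      funext a
      rw [Finset.sum_comm]
      refine Finset.sum_congr rfl (fun k _ => Finset.sum_congr rfl (fun ℓ _ => ?_))
      congr 1
      omega
    rw [this]
end

section
/- Let ψ : [0,1) → [0,∞) be integrable with lim_{x↑1} ψ(x) = ψ₁ ∈ (0,∞). Then for fixed positive reals t₁, t₂, the quantity (1/(n log n)) · ∫_0^1 ∑_{k=1}^{⌊n t₁⌋} ∑_{ℓ=1}^{⌊n t₂⌋} a^{|k-ℓ|} |ψ(a) − ψ₁| da converges to 0 as n → ∞. -/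
open Finset Filter MeasureTheory

lemma finset_geom_sum_le {a : ℝ} (ha : 0 ≤ a) (ha1 : a < 1) (S : Finset ℕ) :
    ∑ j ∈ S, a ^ j ≤ (1 - a)⁻¹ := by
  calc ∑ j ∈ S, a ^ j ≤ ∑' j : ℕ, a ^ j :=
        Summable.sum_le_tsum S (fun i _ => pow_nonneg ha i) (summable_geometric_of_lt_one ha ha1)
    _ = (1 - a)⁻¹ := tsum_geometric_of_lt_one ha ha1

lemma inner_sum_le {a : ℝ} (ha : 0 ≤ a) (ha1 : a < 1) (k L : ℕ) :
    ∑ ℓ ∈ Finset.Icc 1 L, a ^ (((k : ℤ) - ℓ).natAbs) ≤ 2 * (1 - a)⁻¹ := by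
  classical
  rw [← Finset.sum_filter_add_sum_filter_not (Finset.Icc 1 L) (· ≤ k)]
  have h1 : ∑ ℓ ∈ (Finset.Icc 1 L).filter (· ≤ k), a ^ (((k : ℤ) - ℓ).natAbs)
      ≤ (1 - a)⁻¹ := by
    rw [← Finset.sum_image (f := fun j : ℕ => a ^ j)
      (g := fun ℓ : ℕ => ((k : ℤ) - ℓ).natAbs) ?_]
    · exact finset_geom_sum_le ha ha1 _
    · intro x hx y hy hxy
      simp only [Finset.mem_coe, Finset.mem_filter, Finset.mem_Icc] at hx hy
      simp only at hxy
      omega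
  have h2 : ∑ ℓ ∈ (Finset.Icc 1 L).filter (fun ℓ => ¬ ℓ ≤ k), a ^ (((k : ℤ) - ℓ).natAbs)
      ≤ (1 - a)⁻¹ := by
    rw [← Finset.sum_image (f := fun j : ℕ => a ^ j)
      (g := fun ℓ : ℕ => ((k : ℤ) - ℓ).natAbs) ?_]
    · exact finset_geom_sum_le ha ha1 _
    · intro x hx y hy hxy
      simp only [Finset.mem_coe, Finset.mem_filter, Finset.mem_Icc] at hx hy
      simp only at hxy
      omega
  linarith

lemma double_sum_le_geom {a : ℝ} (ha : 0 ≤ a) (ha1 : a < 1) (K L : ℕ) :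
    ∑ k ∈ Finset.Icc 1 K, ∑ ℓ ∈ Finset.Icc 1 L, a ^ (((k : ℤ) - ℓ).natAbs)
      ≤ K * (2 * (1 - a)⁻¹) := by
  calc ∑ k ∈ Finset.Icc 1 K, ∑ ℓ ∈ Finset.Icc 1 L, a ^ (((k : ℤ) - ℓ).natAbs)
      ≤ ∑ k ∈ Finset.Icc 1 K, 2 * (1 - a)⁻¹ :=
        Finset.sum_le_sum fun k _ => inner_sum_le ha ha1 k L
    _ = K * (2 * (1 - a)⁻¹) := by simp [Nat.card_Icc]

lemma double_sum_le_card {a : ℝ} (ha : 0 ≤ a) (ha1 : a ≤ 1) (K L : ℕ) :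
    ∑ k ∈ Finset.Icc 1 K, ∑ ℓ ∈ Finset.Icc 1 L, a ^ (((k : ℤ) - ℓ).natAbs)
      ≤ (K : ℝ) * L := by
  calc ∑ k ∈ Finset.Icc 1 K, ∑ ℓ ∈ Finset.Icc 1 L, a ^ (((k : ℤ) - ℓ).natAbs)
      ≤ ∑ _k ∈ Finset.Icc 1 K, ∑ _ℓ ∈ Finset.Icc 1 L, (1:ℝ) :=
        Finset.sum_le_sum fun k _ => Finset.sum_le_sum fun ℓ _ =>
          pow_le_one₀ ha ha1
    _ = (K : ℝ) * L := by simp [Nat.card_Icc, mul_comm]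

lemma double_sum_nonneg {a : ℝ} (ha : 0 ≤ a) (K L : ℕ) :
    0 ≤ ∑ k ∈ Finset.Icc 1 K, ∑ ℓ ∈ Finset.Icc 1 L, a ^ (((k : ℤ) - ℓ).natAbs) :=
  Finset.sum_nonneg fun k _ => Finset.sum_nonneg fun ℓ _ => pow_nonneg ha _

set_option maxHeartbeats 1000000
theorem integral_double_sum_psi_error_limit (ψ : ℝ → ℝ) (ψ₁ : ℝ) (hψ₁ : 0 < ψ₁)
    (hnonneg : ∀ x ∈ Set.Ico (0 : ℝ) 1, 0 ≤ ψ x)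
    (hint : IntegrableOn ψ (Set.Ico (0 : ℝ) 1))
    (hlim : Tendsto ψ (nhdsWithin 1 (Set.Iio 1)) (nhds ψ₁))
    (t₁ t₂ : ℝ) (ht₁ : 0 < t₁) (ht₂ : 0 < t₂) :
    Tendsto (fun n : ℕ =>
      (1 / (n * Real.log n)) *
        ∫ a in Set.Icc (0 : ℝ) 1,
          ∑ k ∈ Finset.Icc 1 ⌊(n : ℝ) * t₁⌋₊, ∑ ℓ ∈ Finset.Icc 1 ⌊(n : ℝ) * t₂⌋₊,
            a ^ (((k : ℤ) - ℓ).natAbs) * |ψ a - ψ₁|)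
      atTop (nhds 0) := by
  set φ : ℝ → ℝ := fun a => |ψ a - ψ₁| with hφdef
  have hφnonneg : ∀ a, 0 ≤ φ a := fun a => abs_nonneg _
  have hφint : IntegrableOn φ (Set.Icc (0:ℝ) 1) := by
    rw [IntegrableOn, Measure.restrict_congr_set Ico_ae_eq_Icc.symm]
    exact (hint.sub (integrableOn_const (by simp [Real.volume_Ico]))).abs
  set I : ℝ := ∫ a in Set.Icc (0:ℝ) 1, φ a with hIdef
  have hI0 : 0 ≤ I := setIntegral_nonneg measurableSet_Icc fun a _ => hφnonneg a
  rw [NormedAddCommGroup.tendsto_nhds_zero]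
  intro ε hε
  set ε' : ℝ := ε / (6 * t₁ + 2) with hε'def
  have hε'pos : 0 < ε' := div_pos hε (by linarith)
  have hev : {x : ℝ | |ψ x - ψ₁| < ε'} ∈ nhdsWithin 1 (Set.Iio 1) := by
    have := Metric.tendsto_nhds.mp hlim ε' hε'pos
    exact (by simpa [Real.dist_eq] using this : ∀ᶠ x in nhdsWithin 1 (Set.Iio 1), |ψ x - ψ₁| < ε')
  obtain ⟨c₀, hc₀lt, hc₀sub⟩ := mem_nhdsLT_iff_exists_Ioo_subset.mp hev
  rw [Set.mem_Iio] at hc₀lt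
  set δ : ℝ := min (1 - c₀) 1 with hδdef
  have hδpos : 0 < δ := lt_min (by linarith) one_pos
  have hδ1 : δ ≤ 1 := min_le_right _ _
  set c : ℝ := 1 - δ with hcdef
  have hc0 : 0 ≤ c := by simp only [hcdef]; linarith
  have hc1 : c < 1 := by simp only [hcdef]; linarith
  have hcc₀ : c₀ ≤ c := by
    have := min_le_left (1 - c₀) 1
    simp only [hcdef]; linarith
  have hsmall : ∀ a, c < a → a < 1 → φ a < ε' := fun a h1 h2 =>
    hc₀sub ⟨lt_of_le_of_lt hcc₀ h1, h2⟩
  have htend : Tendsto (fun n : ℕ => (n:ℝ) * t₂) atTop atTop :=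
    (tendsto_natCast_atTop_atTop).atTop_mul_const ht₂
  have hlogtend : Tendsto (fun n : ℕ => Real.log n) atTop atTop :=
    Real.tendsto_log_atTop.comp tendsto_natCast_atTop_atTop
  filter_upwards [Filter.eventually_ge_atTop 2, htend.eventually_gt_atTop (1/δ),
    hlogtend.eventually_gt_atTop (max (2 * Real.log (t₂+1) + 1) (4 * t₁ * (δ⁻¹ * I) / ε))]
    with n hn2 hnt₂ hlogn
  set K := ⌊(n:ℝ) * t₁⌋₊ with hKdef
  set L := ⌊(n:ℝ) * t₂⌋₊ with hLdef
  set M : ℝ := (L:ℝ) + 1 with hMdef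
  set c' : ℝ := 1 - M⁻¹ with hc'def
  have hnR : (2:ℝ) ≤ (n:ℝ) := by exact_mod_cast hn2
  have hlogpos : 0 < Real.log n := Real.log_pos (by linarith)
  have hM1 : (1:ℝ) ≤ M := by
    have : (0:ℝ) ≤ (L:ℝ) := Nat.cast_nonneg _
    simp only [hMdef]; linarith
  have hMpos : (0:ℝ) < M := by linarith
  have hMgt : 1/δ < M := by
    have := Nat.lt_floor_add_one ((n:ℝ) * t₂)
    simp only [hMdef]
    push_cast at this ⊢
    linarith
  have h1M : M⁻¹ < δ := by
    rw [div_lt_iff₀ hδpos] at hMgt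
    rw [inv_lt_iff_one_lt_mul₀ hMpos]
    linarith
  have hcc' : c < c' := by simp only [hcdef, hc'def]; linarith
  have hc'1 : c' < 1 := by
    have : (0:ℝ) < M⁻¹ := by positivity
    simp only [hc'def]; linarith
  have hKle : (K:ℝ) ≤ (n:ℝ) * t₁ := Nat.floor_le (by positivity)
  have hK0 : (0:ℝ) ≤ (K:ℝ) := Nat.cast_nonneg _
  have hMle : M ≤ (n:ℝ) * (t₂ + 1) := by
    have hL : (L:ℝ) ≤ (n:ℝ) * t₂ := Nat.floor_le (by positivity)
    simp only [hMdef]; linarith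
  have hlogM0 : 0 ≤ Real.log M := Real.log_nonneg hM1
  have hlogMle : 2 * Real.log M + 1 ≤ 3 * Real.log n := by
    have h1 : Real.log M ≤ Real.log ((n:ℝ) * (t₂+1)) :=
      Real.log_le_log hMpos hMle
    rw [Real.log_mul (by positivity) (by positivity)] at h1
    have h2 := (max_lt_iff.mp hlogn).1
    linarith
  have hεlog : 4 * t₁ * (δ⁻¹ * I) < ε * Real.log n := by
    have h2 := (max_lt_iff.mp hlogn).2
    rw [div_lt_iff₀ hε] at h2
    linarith
  -- rewrite integrand as product
  set P : ℝ → ℝ := fun a => ∑ k ∈ Finset.Icc 1 K, ∑ ℓ ∈ Finset.Icc 1 L,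
    a ^ (((k : ℤ) - ℓ).natAbs) with hPdef
  have hPcont : Continuous P :=
    continuous_finset_sum _ fun k _ => continuous_finset_sum _ fun ℓ _ => continuous_pow _
  have hPnonneg : ∀ a : ℝ, 0 ≤ a → 0 ≤ P a := fun a ha => double_sum_nonneg ha K L
  have hPgeom : ∀ a : ℝ, 0 ≤ a → a < 1 → P a ≤ (K:ℝ) * (2 * (1-a)⁻¹) :=
    fun a h h' => double_sum_le_geom h h' K L
  have hPcard : ∀ a : ℝ, 0 ≤ a → a ≤ 1 → P a ≤ (K:ℝ) * L :=
    fun a h h' => double_sum_le_card h h' K L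
  have hGint : IntegrableOn (fun a => P a * φ a) (Set.Icc (0:ℝ) 1) := by
    apply Integrable.bdd_mul (c := (K:ℝ) * L) hφint
      (hPcont.aestronglyMeasurable.restrict)
    filter_upwards [ae_restrict_mem measurableSet_Icc] with a ha
    rw [Real.norm_eq_abs, abs_of_nonneg (hPnonneg a ha.1)]
    exact hPcard a ha.1 ha.2
  have hrw : ∫ a in Set.Icc (0:ℝ) 1,
      ∑ k ∈ Finset.Icc 1 K, ∑ ℓ ∈ Finset.Icc 1 L,
        a ^ (((k : ℤ) - ℓ).natAbs) * |ψ a - ψ₁|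
      = ∫ a in Set.Icc (0:ℝ) 1, P a * φ a := by
    congr 1 with a
    simp only [hPdef, ← Finset.sum_mul, hφdef]
  rw [hrw]
  set Int : ℝ := ∫ a in Set.Icc (0:ℝ) 1, P a * φ a with hIntdef
  have hIntnonneg : 0 ≤ Int :=
    setIntegral_nonneg measurableSet_Icc fun a ha => mul_nonneg (hPnonneg a ha.1) (hφnonneg a)
  -- split the integral
  have hsub1 : Set.Icc (0:ℝ) c ⊆ Set.Icc (0:ℝ) 1 := Set.Icc_subset_Icc le_rfl hc1.le
  have hsub2 : Set.Ioc c 1 ⊆ Set.Icc (0:ℝ) 1 :=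
    Set.Ioc_subset_Icc_self.trans (Set.Icc_subset_Icc hc0 le_rfl)
  have int1 : IntegrableOn (fun a => P a * φ a) (Set.Icc (0:ℝ) c) := hGint.mono_set hsub1
  have int2 : IntegrableOn (fun a => P a * φ a) (Set.Ioc c 1) := hGint.mono_set hsub2
  have hdisj : Disjoint (Set.Icc (0:ℝ) c) (Set.Ioc c 1) := by
    rw [Set.disjoint_left]
    rintro x ⟨_, hx2⟩ ⟨hx3, _⟩
    exact absurd hx2 (not_le.2 hx3)
  have hsplit : Int = (∫ a in Set.Icc (0:ℝ) c, P a * φ a)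
      + ∫ a in Set.Ioc c 1, P a * φ a := by
    rw [hIntdef, ← setIntegral_union hdisj measurableSet_Ioc int1 int2,
      Set.Icc_union_Ioc_eq_Icc hc0 hc1.le]
  -- piece 1
  have hp1 : ∫ a in Set.Icc (0:ℝ) c, P a * φ a ≤ (K:ℝ) * (2 * δ⁻¹) * I := by
    have step1 : ∫ a in Set.Icc (0:ℝ) c, P a * φ a
        ≤ ∫ a in Set.Icc (0:ℝ) c, (K:ℝ) * (2 * δ⁻¹) * φ a := by
      apply setIntegral_mono_on int1 ((hφint.mono_set hsub1).const_mul _) measurableSet_Icc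
      intro a ha
      have ha1 : a < 1 := lt_of_le_of_lt ha.2 hc1
      have h1a : δ ≤ 1 - a := by
        have := ha.2; simp only [hcdef] at this; linarith
      have hinv : (1-a)⁻¹ ≤ δ⁻¹ := by
        apply inv_anti₀ hδpos h1a
      calc P a * φ a ≤ ((K:ℝ) * (2 * (1-a)⁻¹)) * φ a :=
            mul_le_mul_of_nonneg_right (hPgeom a ha.1 ha1) (hφnonneg a)
        _ ≤ (K:ℝ) * (2 * δ⁻¹) * φ a := by
            apply mul_le_mul_of_nonneg_right _ (hφnonneg a)
            exact mul_le_mul_of_nonneg_left (by linarith : 2 * (1-a)⁻¹ ≤ 2 * δ⁻¹) hK0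
    have step2 : ∫ a in Set.Icc (0:ℝ) c, (K:ℝ) * (2 * δ⁻¹) * φ a
        = (K:ℝ) * (2 * δ⁻¹) * ∫ a in Set.Icc (0:ℝ) c, φ a := integral_const_mul _ _
    have step3 : ∫ a in Set.Icc (0:ℝ) c, φ a ≤ I := by
      apply setIntegral_mono_set hφint (Eventually.of_forall hφnonneg)
        (HasSubset.Subset.eventuallyLE hsub1)
    rw [step2] at step1
    have : (K:ℝ) * (2 * δ⁻¹) * ∫ a in Set.Icc (0:ℝ) c, φ a ≤ (K:ℝ) * (2 * δ⁻¹) * I := by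
      apply mul_le_mul_of_nonneg_left step3 (by positivity)
    linarith
  -- piece 2
  have hne1 : ∀ᵐ a : ℝ, a ≠ (1:ℝ) := by
    rw [ae_iff]
    simp only [ne_eq, not_not]
    simpa using measure_singleton (1:ℝ)
  have hp2a : ∫ a in Set.Ioc c 1, P a * φ a ≤ ∫ a in Set.Ioc c 1, P a * ε' := by
    apply setIntegral_mono_ae_restrict int2 ((hPcont.integrableOn_Ioc).mul_const _)
    filter_upwards [ae_restrict_mem measurableSet_Ioc, ae_restrict_of_ae hne1] with a ha hane
    have ha1 : a < 1 := lt_of_le_of_ne ha.2 hane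
    exact mul_le_mul_of_nonneg_left (le_of_lt (hsmall a ha.1 ha1))
      (hPnonneg a (le_trans hc0 ha.1.le))
  have hp2b : ∫ a in Set.Ioc c 1, P a * ε' = ε' * ∫ a in Set.Ioc c 1, P a := by
    rw [integral_mul_const, mul_comm]
  -- bound ∫ P on Ioc c 1
  have hPsplit : ∫ a in Set.Ioc c 1, P a
      = (∫ a in Set.Ioc c c', P a) + ∫ a in Set.Ioc c' 1, P a := by
    have hd : Disjoint (Set.Ioc c c') (Set.Ioc c' 1) := by
      rw [Set.disjoint_left]
      rintro x ⟨_, hx2⟩ ⟨hx3, _⟩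
      exact absurd hx2 (not_le.2 hx3)
    rw [← setIntegral_union hd measurableSet_Ioc (hPcont.integrableOn_Ioc)
      (hPcont.integrableOn_Ioc), Set.Ioc_union_Ioc_eq_Ioc hcc'.le hc'1.le]
  have hsubA : ∫ a in Set.Ioc c c', P a ≤ (K:ℝ) * 2 * Real.log M := by
    have hInvInt : IntegrableOn (fun a : ℝ => (K:ℝ) * 2 * (1-a)⁻¹) (Set.Ioc c c') := by
      apply IntegrableOn.mono_set _ Set.Ioc_subset_Icc_self
      apply ContinuousOn.integrableOn_Icc
      apply ContinuousOn.mul continuousOn_const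
      apply ContinuousOn.inv₀ ((continuous_const.sub continuous_id).continuousOn)
      intro a ha
      have : a ≤ c' := ha.2
      have : a < 1 := lt_of_le_of_lt this hc'1
      intro h
      rw [Pi.sub_apply] at h
      rw [sub_eq_zero] at h
      simp only [id_eq] at h
      linarith
    have stepA : ∫ a in Set.Ioc c c', P a ≤ ∫ a in Set.Ioc c c', (K:ℝ) * 2 * (1-a)⁻¹ := by
      apply setIntegral_mono_on (hPcont.integrableOn_Ioc) hInvInt measurableSet_Ioc
      intro a ha
      have ha0 : 0 ≤ a := le_trans hc0 ha.1.le
      have ha1 : a < 1 := lt_of_le_of_lt ha.2 hc'1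
      calc P a ≤ (K:ℝ) * (2 * (1-a)⁻¹) := hPgeom a ha0 ha1
        _ = (K:ℝ) * 2 * (1-a)⁻¹ := by ring
    have stepB : ∫ a in Set.Ioc c c', (K:ℝ) * 2 * (1-a)⁻¹
        = (K:ℝ) * 2 * ∫ a in Set.Ioc c c', (1-a)⁻¹ := integral_const_mul _ _
    have stepC : ∫ a in Set.Ioc c c', (1-a)⁻¹ = Real.log ((1-c) / (1-c')) := by
      rw [← intervalIntegral.integral_of_le hcc'.le]
      have := intervalIntegral.integral_comp_sub_left (a := c) (b := c')
        (fun u : ℝ => u⁻¹) 1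
      rw [this]
      apply integral_inv
      rw [Set.uIcc_of_le (by linarith : (1:ℝ) - c' ≤ 1 - c)]
      rintro ⟨h1, _⟩
      have h1c' : (0:ℝ) < 1 - c' := by linarith
      linarith
    have stepD : Real.log ((1-c) / (1-c')) ≤ Real.log M := by
      have h1 : (1:ℝ) - c = δ := by simp [hcdef]
      have h2 : (1:ℝ) - c' = M⁻¹ := by simp [hc'def]
      have h3 : δ / M⁻¹ = δ * M := by field_simp
      rw [h1, h2, h3]
      apply Real.log_le_log (by positivity)
      have := mul_nonneg (by linarith : (0:ℝ) ≤ 1 - δ) hMpos.le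
      linarith
    rw [stepB] at stepA
    rw [stepC] at stepA
    have : (K:ℝ) * 2 * Real.log ((1-c)/(1-c')) ≤ (K:ℝ) * 2 * Real.log M :=
      mul_le_mul_of_nonneg_left stepD (by positivity)
    linarith
  have hsubB : ∫ a in Set.Ioc c' 1, P a ≤ (K:ℝ) := by
    have hc'0 : 0 ≤ c' := by
      have : M⁻¹ ≤ 1 := by
        rw [inv_le_one_iff₀]; right; exact hM1
      simp only [hc'def]; linarith
    have stepA : ∫ a in Set.Ioc c' 1, P a ≤ ∫ a in Set.Ioc c' 1, ((K:ℝ) * L) := by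
      apply setIntegral_mono_on (hPcont.integrableOn_Ioc)
        (integrableOn_const (by simp [Real.volume_Ioc])) measurableSet_Ioc
      intro a ha
      exact hPcard a (le_trans hc'0 ha.1.le) ha.2
    have stepB : ∫ a in Set.Ioc c' 1, ((K:ℝ) * L) = (1 - c') * ((K:ℝ) * L) := by
      rw [setIntegral_const, Measure.real, Real.volume_Ioc, ENNReal.toReal_ofReal (by linarith), smul_eq_mul]
    have hLM : (L:ℝ) ≤ M := by simp only [hMdef]; linarith
    have : (1 - c') * ((K:ℝ) * L) ≤ (K:ℝ) := by
      have h2 : (1:ℝ) - c' = M⁻¹ := by simp [hc'def]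
      rw [h2]
      calc M⁻¹ * ((K:ℝ) * L) ≤ M⁻¹ * ((K:ℝ) * M) := by
            apply mul_le_mul_of_nonneg_left _ (by positivity)
            exact mul_le_mul_of_nonneg_left hLM hK0
        _ = (K:ℝ) := by field_simp
    linarith [stepA, stepB.le, stepB.ge]
  have hp2 : ∫ a in Set.Ioc c 1, P a * φ a ≤ ε' * ((K:ℝ) * 2 * Real.log M + K) := by
    have : ∫ a in Set.Ioc c 1, P a ≤ (K:ℝ) * 2 * Real.log M + K := by
      rw [hPsplit]; linarith
    have h' : ε' * ∫ a in Set.Ioc c 1, P a ≤ ε' * ((K:ℝ) * 2 * Real.log M + K) :=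
      mul_le_mul_of_nonneg_left this hε'pos.le
    rw [hp2b] at hp2a
    linarith
  -- combine
  have hBound : Int ≤ (K:ℝ) * (2 * δ⁻¹) * I + ε' * ((K:ℝ) * 2 * Real.log M + K) := by
    rw [hsplit]; linarith
  have hX : (0:ℝ) < (n:ℝ) * Real.log n := mul_pos (by linarith : (0:ℝ) < (n:ℝ)) hlogpos
  rw [Real.norm_eq_abs, abs_of_nonneg (mul_nonneg (one_div_nonneg.mpr hX.le) hIntnonneg)]
  rw [one_div_mul_eq_div, div_lt_iff₀ hX]
  -- final arithmetic : Int < ε * (n * log n)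
  have hterm1 : (K:ℝ) * (2 * δ⁻¹) * I < ε / 2 * ((n:ℝ) * Real.log n) := by
    have hD : 0 ≤ δ⁻¹ * I := by positivity
    have h1 : (K:ℝ) * (2 * δ⁻¹) * I ≤ ((n:ℝ) * t₁) * (2 * δ⁻¹) * I := by
      apply mul_le_mul_of_nonneg_right _ hI0
      exact mul_le_mul_of_nonneg_right hKle (by positivity)
    have h2 : (n:ℝ)/2 * (4 * t₁ * (δ⁻¹ * I)) < (n:ℝ)/2 * (ε * Real.log n) :=
      mul_lt_mul_of_pos_left hεlog (by positivity)
    linarith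
  have hterm2 : ε' * ((K:ℝ) * 2 * Real.log M + K) ≤ ε / 2 * ((n:ℝ) * Real.log n) := by
    have h1 : (K:ℝ) * 2 * Real.log M + K ≤ (K:ℝ) * (2 * Real.log M + 1) := le_of_eq (by ring)
    have h2 : (K:ℝ) * (2 * Real.log M + 1) ≤ ((n:ℝ) * t₁) * (3 * Real.log n) := by
      apply mul_le_mul hKle hlogMle (by linarith) (by positivity)
    have h3 : ε' * ((K:ℝ) * 2 * Real.log M + K) ≤ ε' * (((n:ℝ) * t₁) * (3 * Real.log n)) :=
      mul_le_mul_of_nonneg_left (le_trans h1 h2) hε'pos.le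
    have h4 : ε' * (((n:ℝ) * t₁) * (3 * Real.log n)) ≤ ε / 2 * ((n:ℝ) * Real.log n) := by
      rw [hε'def]
      rw [div_mul_eq_mul_div, div_le_iff₀ (by linarith : (0:ℝ) < 6 * t₁ + 2)]
      have := mul_nonneg hε.le hX.le
      linarith
    linarith
  linarith
end

section
/- Let α be a random variable on (0,1) with density ψ(x)(1−x), where ψ is integrable on [0,1) with lim_{x↑1} ψ(x) = ψ₁ ∈ (0,∞), and let λ > 0. Then for each x > 0, N · P(λ(1+α)/(N(1−α)²) > x) → ψ₁ λ / x as N → ∞. -/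
open MeasureTheory Filter Set

set_option maxHeartbeats 1000000 in
theorem tail_prob_limit {Ω : Type*} [MeasurableSpace Ω]
    (ℙ : Measure Ω) [IsProbabilityMeasure ℙ]
    (α : Ω → ℝ) (hα : Measurable α) (hrange : ∀ ω, α ω ∈ Set.Ioo (0 : ℝ) 1)
    (ψ₁ : ℝ) (hψ₁ : 0 < ψ₁)
    (ψ : ℝ → ℝ) (hnonneg : ∀ x ∈ Set.Ico (0 : ℝ) 1, 0 ≤ ψ x)
    (hint : IntegrableOn ψ (Set.Ico (0 : ℝ) 1))
    (hlim : Tendsto ψ (nhdsWithin 1 (Set.Iio 1)) (nhds ψ₁))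
    (hdens : ℙ.map α = volume.withDensity
      (fun x => ENNReal.ofReal ((Set.Ioo (0 : ℝ) 1).indicator
        (fun x => ψ x * (1 - x)) x)))
    (lam : ℝ) (hlam : 0 < lam) (x : ℝ) (hx : 0 < x) :
    Tendsto (fun N : ℕ =>
      (N : ℝ) * (ℙ {ω | lam * (1 + α ω) / (N * (1 - α ω) ^ 2) > x}).toReal)
      atTop (nhds (ψ₁ * lam / x)) := by
  set u : ℕ → ℝ := fun N => (-lam + Real.sqrt (lam^2 + 8*lam*N*x))/(2*N*x) with hu_def
  have hu_key : ∀ N : ℕ, 1 ≤ N → (N:ℝ)*x*(u N)^2 + lam*(u N) - 2*lam = 0 := by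
    intro N hN
    have hn : (0:ℝ) < N := by exact_mod_cast hN
    have harg : (0:ℝ) ≤ lam^2 + 8*lam*N*x := by positivity
    have hs := Real.sq_sqrt harg
    simp only [hu_def]
    field_simp
    nlinarith [hs, Real.sq_sqrt (show (0:ℝ) ≤ lam*(lam+N*x*8) by positivity)]
  have hu_pos : ∀ N : ℕ, 1 ≤ N → 0 < u N := by
    intro N hN
    have hn : (0:ℝ) < N := by exact_mod_cast hN
    have h1 : lam < Real.sqrt (lam^2 + 8*lam*N*x) := by
      have h2 : Real.sqrt (lam^2) < Real.sqrt (lam^2 + 8*lam*N*x) :=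
        Real.sqrt_lt_sqrt (by positivity) (by nlinarith [mul_pos (mul_pos hlam hn) hx])
      rwa [Real.sqrt_sq hlam.le] at h2
    have : 0 < (-lam + Real.sqrt (lam^2+8*lam*N*x)) := by linarith
    exact div_pos this (by positivity)
  have hu_lim : Tendsto u atTop (nhds 0) := by
    have hb : Tendsto (fun N : ℕ => Real.sqrt (2*lam/x / N)) atTop (nhds 0) := by
      have h1 := tendsto_const_div_atTop_nhds_zero_nat (2*lam/x)
      have h2 := (Real.continuous_sqrt.tendsto 0).comp h1
      simpa only [Real.sqrt_zero, Function.comp_def] using h2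
    refine squeeze_zero' (eventually_atTop.2 ⟨1, fun N hN => (hu_pos N hN).le⟩)
      (eventually_atTop.2 ⟨1, fun N hN => ?_⟩) hb
    have hn : (0:ℝ) < N := by exact_mod_cast hN
    have h0 := hu_key N hN
    have hup := hu_pos N hN
    rw [Real.le_sqrt (hu_pos N hN).le (by positivity)]
    rw [div_div, le_div_iff₀ (by positivity)]
    nlinarith
  set S : ℕ → Set ℝ := fun N => {a : ℝ | lam * (1 + a) / (N * (1 - a) ^ 2) > x} with hS_def
  have hS_meas : ∀ N, MeasurableSet (S N) := by
    intro N
    exact measurableSet_lt measurable_const (by fun_prop)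
  set F : ℝ → ℝ := fun a => (Set.Ioo (0:ℝ) 1).indicator (fun t => ψ t * (1 - t)) a with hF_def
  have hmap : ∀ N : ℕ, ℙ {ω | lam * (1 + α ω) / (N * (1 - α ω) ^ 2) > x}
      = ∫⁻ a in S N, ENNReal.ofReal (F a) := by
    intro N
    have h1 : {ω | lam * (1 + α ω) / (N * (1 - α ω) ^ 2) > x} = α ⁻¹' (S N) := rfl
    rw [h1, ← Measure.map_apply hα (hS_meas N), hdens, withDensity_apply _ (hS_meas N)]
  have hψ_asm : AEStronglyMeasurable ψ (volume.restrict (Ioo (0:ℝ) 1)) := by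
    rw [Measure.restrict_congr_set Ioo_ae_eq_Ico]
    exact hint.aestronglyMeasurable
  have hF_asm : AEStronglyMeasurable F volume := by
    rw [hF_def, aestronglyMeasurable_indicator_iff measurableSet_Ioo]
    exact hψ_asm.mul ((measurable_const.sub measurable_id).aestronglyMeasurable)
  have hF_nonneg : ∀ a, 0 ≤ F a := by
    intro a
    apply Set.indicator_nonneg
    intro t ht
    exact mul_nonneg (hnonneg t ⟨ht.1.le, ht.2⟩) (by linarith [ht.2])
  have htoReal : ∀ N : ℕ, (∫⁻ a in S N, ENNReal.ofReal (F a)).toReal = ∫ a in S N, F a :=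
    fun N => (integral_eq_lintegral_of_nonneg_ae (ae_of_all _ hF_nonneg)
      (hF_asm.restrict)).symm
  have hindic : ∀ N : ℕ, (∫ a in S N, F a) = ∫ a in (Ioo (0:ℝ) 1 ∩ S N), ψ a * (1 - a) := by
    intro N
    rw [hF_def]
    rw [integral_indicator measurableSet_Ioo, Measure.restrict_restrict measurableSet_Ioo]
  have hIntOn : ∀ c : ℝ, 0 ≤ c → IntegrableOn (fun a => ψ a * (1 - a)) (Ioo c 1) := by
    intro c hc
    have hsub : Ioo c 1 ⊆ Ico (0:ℝ) 1 := fun a ha => ⟨le_trans hc ha.1.le, ha.2⟩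
    have hψI : IntegrableOn ψ (Ioo c 1) := hint.mono_set hsub
    have hsub' : Ioo c 1 ⊆ Ioo (0:ℝ) 1 := fun a ha => ⟨lt_of_le_of_lt hc ha.1, ha.2⟩
    have hasm : AEStronglyMeasurable (fun a => ψ a * (1 - a)) (volume.restrict (Ioo c 1)) :=
      (hψ_asm.mono_measure (Measure.restrict_mono hsub' le_rfl)).mul
        ((measurable_const.sub measurable_id).aestronglyMeasurable)
    refine hψI.norm.mono' hasm ?_
    refine (ae_restrict_iff' measurableSet_Ioo).2 (ae_of_all _ fun a ha => ?_)
    have h1 : |1 - a| ≤ 1 := abs_le.2 ⟨by linarith [ha.2], by linarith [lt_of_le_of_lt hc ha.1]⟩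
    calc ‖ψ a * (1 - a)‖ = ‖ψ a‖ * |1 - a| := by rw [norm_mul, Real.norm_eq_abs (1-a)]
      _ ≤ ‖ψ a‖ := mul_le_of_le_one_right (norm_nonneg _) h1
  have hlin : ∀ c : ℝ, c ≤ 1 → (∫ a in Ioo c 1, (1 - a)) = (1 - c)^2/2 := by
    intro c hc
    rw [← integral_Ioc_eq_integral_Ioo, ← intervalIntegral.integral_of_le hc]
    have h1 : (∫ a in c..1, (1 - a)) = (∫ a in c..1, (1:ℝ)) - ∫ a in c..1, a :=
      intervalIntegral.integral_sub intervalIntegrable_const intervalIntegral.intervalIntegrable_id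
    rw [h1, intervalIntegral.integral_const, integral_id]
    simp
    ring
  have hset : ∀ N : ℕ, 1 ≤ N → u N < 1 → Ioo (0:ℝ) 1 ∩ S N = Ioo (1 - u N) 1 := by
    intro N hN hu1
    have hn : (0:ℝ) < N := by exact_mod_cast hN
    have hkey := hu_key N hN
    have hupos := hu_pos N hN
    ext a
    simp only [hS_def, mem_inter_iff, mem_Ioo, mem_setOf_eq, gt_iff_lt]
    constructor
    · rintro ⟨⟨ha0, ha1⟩, hgt⟩
      refine ⟨?_, ha1⟩
      have h1a : 0 < 1 - a := by linarith
      have hden : 0 < (N:ℝ)*(1-a)^2 := by positivity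
      rw [lt_div_iff₀ hden] at hgt
      by_contra h
      push_neg at h
      have h' : u N ≤ 1 - a := by linarith
      nlinarith [hkey, mul_nonneg (mul_pos hn hx).le
        (mul_nonneg (sub_nonneg.2 h') (by linarith : (0:ℝ) ≤ 1 - a + u N))]
    · rintro ⟨ha0, ha1⟩
      have ha0' : 0 < a := by linarith
      refine ⟨⟨ha0', ha1⟩, ?_⟩
      have h1a : 0 < 1 - a := by linarith
      have hden : 0 < (N:ℝ)*(1-a)^2 := by positivity
      rw [lt_div_iff₀ hden]
      nlinarith [hkey, mul_pos (mul_pos hn hx)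
        (mul_pos (show (0:ℝ) < u N - (1-a) by linarith) (show (0:ℝ) < u N + (1-a) by linarith))]
  rw [Metric.tendsto_nhds]
  intro ε₀ hε₀
  have hε₁pos : 0 < min (ψ₁/2) (ε₀ * x / (4 * lam)) := lt_min (by positivity) (by positivity)
  set ε₁ := min (ψ₁/2) (ε₀ * x / (4 * lam)) with hε₁def
  obtain ⟨δ, hδpos, hδ⟩ := Metric.tendsto_nhdsWithin_nhds.1 hlim ε₁ hε₁pos
  have hδ'pos : 0 < min δ (min (1/2) (ε₀ * x / (2 * ψ₁ * lam))) :=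
    lt_min hδpos (lt_min (by norm_num) (by positivity))
  set δ' := min δ (min (1/2) (ε₀ * x / (2 * ψ₁ * lam))) with hδ'def
  have hδ'δ : δ' ≤ δ := min_le_left _ _
  have hδ'half : δ' ≤ 1/2 := le_trans (min_le_right _ _) (min_le_left _ _)
  have hδ'ε : δ' ≤ ε₀ * x / (2 * ψ₁ * lam) := le_trans (min_le_right _ _) (min_le_right _ _)
  have hε₁le : ε₁ ≤ ε₀ * x / (4 * lam) := min_le_right _ _
  have hε₁ψ : ε₁ ≤ ψ₁/2 := min_le_left _ _
  filter_upwards [Metric.tendsto_nhds.1 hu_lim δ' hδ'pos, eventually_ge_atTop 1] with N hNδ hN1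
  have hn : (0:ℝ) < N := by exact_mod_cast hN1
  have hupos := hu_pos N hN1
  have hkey := hu_key N hN1
  have huδ : u N < δ' := by
    rw [Real.dist_eq, sub_zero, abs_of_pos hupos] at hNδ; exact hNδ
  have hu1 : u N < 1 := by linarith
  rw [hmap N, htoReal N, hindic N, hset N hN1 hu1]
  set c := 1 - u N with hcdef
  have hc0 : 0 ≤ c := by rw [hcdef]; linarith
  have hc1 : c ≤ 1 := by rw [hcdef]; linarith
  have hψbound : ∀ a ∈ Ioo c 1, |ψ a - ψ₁| < ε₁ := by
    intro a ha
    have h2 : dist a 1 < δ := by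
      rw [Real.dist_eq, abs_of_neg (by linarith [ha.2] : a - 1 < 0)]
      have h3 : 1 - u N < a := ha.1
      linarith
    have h4 := hδ (mem_Iio.2 ha.2) h2
    rwa [Real.dist_eq] at h4
  have hIψ := hIntOn c hc0
  have hIlin : IntegrableOn (fun a : ℝ => 1 - a) (Ioo c 1) :=
    ((continuous_const.sub continuous_id).integrableOn_Icc (a := c) (b := 1)).mono_set
      Ioo_subset_Icc_self
  have hlow : (ψ₁ - ε₁) * ((1-c)^2/2) ≤ ∫ a in Ioo c 1, ψ a * (1 - a) := by
    rw [← hlin c hc1, ← integral_const_mul]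
    refine setIntegral_mono_on (hIlin.const_mul _) hIψ measurableSet_Ioo fun a ha => ?_
    have hb := abs_lt.1 (hψbound a ha)
    have h1a : (0:ℝ) ≤ 1 - a := by linarith [ha.2]
    exact mul_le_mul_of_nonneg_right (by linarith [hb.1]) h1a
  have hhigh : (∫ a in Ioo c 1, ψ a * (1 - a)) ≤ (ψ₁ + ε₁) * ((1-c)^2/2) := by
    rw [← hlin c hc1, ← integral_const_mul]
    refine setIntegral_mono_on hIψ (hIlin.const_mul _) measurableSet_Ioo fun a ha => ?_
    have hb := abs_lt.1 (hψbound a ha)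
    have h1a : (0:ℝ) ≤ 1 - a := by linarith [ha.2]
    exact mul_le_mul_of_nonneg_right (by linarith [hb.2]) h1a
  set C : ℝ := (2*lam - lam * u N)/(2*x) with hCdef
  have hJ : (N:ℝ) * ((1-c)^2/2) = C := by
    rw [hcdef, hCdef, eq_div_iff (by positivity : (2*x) ≠ 0)]
    linear_combination hkey
  set I := ∫ a in Ioo c 1, ψ a * (1 - a) with hIdef
  have hNI_low : (ψ₁ - ε₁) * C ≤ (N:ℝ) * I := by
    calc (ψ₁ - ε₁)*C = (N:ℝ) * ((ψ₁-ε₁)*((1-c)^2/2)) := by rw [← hJ]; ring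
      _ ≤ (N:ℝ) * I := mul_le_mul_of_nonneg_left hlow hn.le
  have hNI_high : (N:ℝ) * I ≤ (ψ₁ + ε₁) * C := by
    calc (N:ℝ) * I ≤ (N:ℝ) * ((ψ₁+ε₁)*((1-c)^2/2)) := mul_le_mul_of_nonneg_left hhigh hn.le
      _ = (ψ₁ + ε₁)*C := by rw [← hJ]; ring
  have hC_eq : lam/x - C = lam * u N/(2*x) := by rw [hCdef]; field_simp; ring
  have hCpos : 0 ≤ C := by
    rw [hCdef]
    exact div_nonneg (by nlinarith) (by positivity)
  have hCle : C ≤ lam / x := by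
    have h1 : (0:ℝ) ≤ lam * u N/(2*x) := by positivity
    linarith
  have hterm1 : ε₁ * C ≤ ε₀/4 := by
    calc ε₁ * C ≤ (ε₀ * x / (4 * lam)) * (lam/x) :=
          mul_le_mul hε₁le hCle hCpos (by positivity)
      _ = ε₀/4 := by field_simp
  have hterm2 : ψ₁ * (lam/x - C) ≤ ε₀/4 := by
    rw [hC_eq]
    calc ψ₁ * (lam * u N/(2*x)) ≤ ψ₁ * (lam * (ε₀ * x / (2 * ψ₁ * lam))/(2*x)) := by
          gcongr
          linarith
      _ = ε₀/4 := by field_simp; ring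
  have hterm2' : 0 ≤ ψ₁ * (lam/x - C) := mul_nonneg hψ₁.le (by linarith)
  rw [Real.dist_eq, abs_lt]
  have hexp : ψ₁ * (lam / x - C) = ψ₁ * lam / x - ψ₁ * C := by ring
  rw [hexp] at hterm2 hterm2'
  have h1 : (ψ₁ - ε₁) * C = ψ₁ * C - ε₁ * C := by ring
  have h2 : (ψ₁ + ε₁) * C = ψ₁ * C + ε₁ * C := by ring
  rw [h1] at hNI_low
  rw [h2] at hNI_high
  constructor <;> linarith
end

section
/- Let α be a random variable on (0,1) with density ψ(x)(1−x), where ψ is integrable on [0,1) with lim_{x↑1} ψ(x) = ψ₁ ∈ (0,∞), and λ > 0. Define X_N = λ(1+α)/(N(1−α)²). Then lim_{ε→0} limsup_{N→∞} N · E[X_N² · 1{X_N ≤ ε}] = 0. -/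
open MeasureTheory Filter
open scoped ENNReal NNReal

set_option maxHeartbeats 2000000

theorem truncated_second_moment_limit {Ω : Type*} [MeasurableSpace Ω]
    (ℙ : Measure Ω) [IsProbabilityMeasure ℙ]
    (α : Ω → ℝ) (hα : Measurable α) (hrange : ∀ ω, α ω ∈ Set.Ioo (0 : ℝ) 1)
    (ψ₁ : ℝ) (hψ₁ : 0 < ψ₁)
    (ψ : ℝ → ℝ) (hnonneg : ∀ x ∈ Set.Ico (0 : ℝ) 1, 0 ≤ ψ x)
    (hint : IntegrableOn ψ (Set.Ico (0 : ℝ) 1))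
    (hlim : Tendsto ψ (nhdsWithin 1 (Set.Iio 1)) (nhds ψ₁))
    (hdens : ℙ.map α = volume.withDensity
      (fun x => ENNReal.ofReal ((Set.Ioo (0 : ℝ) 1).indicator
        (fun x => ψ x * (1 - x)) x)))
    (lam : ℝ) (hlam : 0 < lam)
    (X : ℕ → Ω → ℝ)
    (hX : ∀ N ω, X N ω = lam * (1 + α ω) / (N * (1 - α ω) ^ 2)) :
    Tendsto (fun ε : ℝ =>
      Filter.limsup (fun N : ℕ =>
        (N : ℝ) * ∫ ω, ({ω | X N ω ≤ ε}.indicator (fun ω => (X N ω) ^ 2)) ω ∂ℙ)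
        atTop)
      (nhdsWithin 0 (Set.Ioi 0)) (nhds 0) := by
  -- the density as a real function
  set d : ℝ → ℝ := fun x => (Set.Ioo (0 : ℝ) 1).indicator (fun x => ψ x * (1 - x)) x with hd
  have hd0 : ∀ x, 0 ≤ d x := by
    intro x
    by_cases hx : x ∈ Set.Ioo (0 : ℝ) 1
    · have : d x = ψ x * (1 - x) := Set.indicator_of_mem hx _
      rw [this]
      exact mul_nonneg (hnonneg x ⟨hx.1.le, hx.2⟩) (by linarith [hx.2])
    · have : d x = 0 := Set.indicator_of_notMem hx _
      rw [this]
  have hdmeas : AEMeasurable d volume := by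
    rw [hd, aemeasurable_indicator_iff measurableSet_Ioo]
    have h1 : AEMeasurable ψ (volume.restrict (Set.Ioo (0 : ℝ) 1)) :=
      hint.aestronglyMeasurable.aemeasurable.mono_measure
        (Measure.restrict_mono Set.Ioo_subset_Ico_self le_rfl)
    exact h1.mul ((measurable_const.sub measurable_id).aemeasurable)
  -- bound for ψ near 1
  obtain ⟨a, ha0, ha1, haψ⟩ :
      ∃ a : ℝ, 0 ≤ a ∧ a < 1 ∧ ∀ x, a < x → x < 1 → ψ x ≤ ψ₁ + 1 := by
    have h : ∀ᶠ x in nhdsWithin 1 (Set.Iio 1), ψ x < ψ₁ + 1 :=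
      hlim.eventually_lt_const (show ψ₁ < ψ₁ + 1 by linarith)
    rw [Filter.eventually_iff, mem_nhdsLT_iff_exists_Ioo_subset] at h
    obtain ⟨l, hl, hsub⟩ := h
    refine ⟨max l 0, le_max_right _ _, max_lt hl zero_lt_one, fun x hx1 hx2 => ?_⟩
    exact le_of_lt (hsub ⟨(le_max_left l 0).trans_lt hx1, hx2⟩)
  have ha1' : (0:ℝ) < 1 - a := by linarith
  set Iψ : ℝ := ∫ x in Set.Ico (0:ℝ) 1, ψ x with hIψ
  have hIψ0 : 0 ≤ Iψ := setIntegral_nonneg measurableSet_Ico hnonneg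
  set C1 : ℝ := 4 * lam ^ 2 / (1 - a) ^ 4 * Iψ with hC1
  set C2 : ℝ := 2 * lam * (ψ₁ + 1) with hC2
  have hC10 : 0 ≤ C1 := mul_nonneg (by positivity) hIψ0
  have hC20 : 0 < C2 := mul_pos (by linarith) (by linarith)
  -- nonnegativity of the sequence
  have hnn : ∀ (ε : ℝ) (N : ℕ),
      0 ≤ (N : ℝ) * ∫ ω, ({ω | X N ω ≤ ε}.indicator (fun ω => (X N ω) ^ 2)) ω ∂ℙ := by
    intro ε N
    refine mul_nonneg (Nat.cast_nonneg N) (integral_nonneg fun ω => ?_)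
    exact Set.indicator_nonneg (fun ω _ => sq_nonneg _) ω
  -- main bound
  have hmain : ∀ (ε : ℝ), 0 < ε → ∀ (N : ℕ), 1 ≤ N →
      (N : ℝ) * ∫ ω, ({ω | X N ω ≤ ε}.indicator (fun ω => (X N ω) ^ 2)) ω ∂ℙ
        ≤ C1 / N + C2 * ε := by
    intro ε hε N hN1
    have hN : (1:ℝ) ≤ (N:ℝ) := by exact_mod_cast hN1
    have hNpos : (0:ℝ) < N := lt_of_lt_of_le zero_lt_one hN
    set g : ℝ → ℝ := fun x => lam * (1 + x) / (N * (1 - x) ^ 2) with hg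
    have hgmeas : Measurable g := by
      rw [hg]
      exact (measurable_const.mul (measurable_const.add measurable_id)).div
        (measurable_const.mul ((measurable_const.sub measurable_id).pow_const 2))
    set F : ℝ → ℝ := fun x => {x | g x ≤ ε}.indicator (fun x => (g x) ^ 2) x with hF
    have hFmeas : Measurable F := by
      rw [hF]
      exact Measurable.indicator (hgmeas.pow_const 2) (measurableSet_le hgmeas measurable_const)
    have hF0 : ∀ x, 0 ≤ F x := by
      intro x
      rw [hF]
      exact Set.indicator_nonneg (fun x _ => sq_nonneg _) x
    have hFle : ∀ x, F x ≤ (g x) ^ 2 := by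
      intro x
      by_cases hm : x ∈ {x | g x ≤ ε}
      · have : F x = (g x) ^ 2 := Set.indicator_of_mem hm _
        rw [this]
      · have : F x = 0 := Set.indicator_of_notMem hm _
        rw [this]; positivity
    -- step A: rewrite the integral via the density
    have stepA : (∫ ω, ({ω | X N ω ≤ ε}.indicator (fun ω => (X N ω) ^ 2)) ω ∂ℙ)
        = ∫ x, d x * F x := by
      have hcomp : (fun ω => ({ω | X N ω ≤ ε}.indicator (fun ω => (X N ω) ^ 2)) ω)
          = fun ω => F (α ω) := by
        funext ω
        have h1 : {ω | X N ω ≤ ε} = α ⁻¹' {x | g x ≤ ε} := by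
          ext ω'; simp only [Set.mem_setOf_eq, Set.mem_preimage, hX, hg]
        have h2 : (fun ω => (X N ω) ^ 2) = (fun x => (g x) ^ 2) ∘ α := by
          funext ω'; simp only [Function.comp_apply, hX, hg]
        rw [h1, h2]
        exact Set.indicator_comp_right α
      rw [hcomp]
      rw [← integral_map hα.aemeasurable hFmeas.aestronglyMeasurable, hdens]
      have htoNN : AEMeasurable (fun x => Real.toNNReal (d x)) volume :=
        measurable_real_toNNReal.comp_aemeasurable hdmeas
      rw [show (fun x => ENNReal.ofReal ((Set.Ioo (0 : ℝ) 1).indicator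
            (fun x => ψ x * (1 - x)) x)) = fun x => ((Real.toNNReal (d x) : ℝ≥0) : ℝ≥0∞)
          from rfl]
      rw [integral_withDensity_eq_integral_smul₀ htoNN F]
      congr 1; funext x
      rw [NNReal.smul_def, smul_eq_mul, Real.coe_toNNReal _ (hd0 x)]
    -- the truncation threshold
    set δ : ℝ := Real.sqrt (lam / (N * ε)) with hδ
    have hδpos : 0 < δ := Real.sqrt_pos.2 (div_pos hlam (mul_pos hNpos hε))
    have hδsq : δ ^ 2 = lam / (N * ε) :=
      Real.sq_sqrt (div_pos hlam (mul_pos hNpos hε)).le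
    -- dominating functions
    set c1 : ℝ := 4 * lam ^ 2 / ((1 - a) ^ 4 * N) with hc1
    set c2 : ℝ := (ψ₁ + 1) * (4 * lam ^ 2 / N) with hc2
    have hc10 : 0 ≤ c1 := by positivity
    have hc20 : 0 ≤ c2 := mul_nonneg (by linarith) (by positivity)
    set H1 : ℝ → ℝ := (Set.Ioc (0:ℝ) a).indicator (fun x => c1 * ψ x) with hH1
    set H2 : ℝ → ℝ := (Set.Ioc a (1 - δ)).indicator (fun x => c2 * ((1 - x) ^ 3)⁻¹) with hH2
    have hH10 : ∀ x, 0 ≤ H1 x := by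
      intro x
      rw [hH1]
      refine Set.indicator_nonneg (fun x hx => ?_) x
      exact mul_nonneg hc10 (hnonneg x ⟨hx.1.le, lt_of_le_of_lt hx.2 ha1⟩)
    have hH20 : ∀ x, 0 ≤ H2 x := by
      intro x
      rw [hH2]
      refine Set.indicator_nonneg (fun x hx => ?_) x
      have hx1 : 0 < 1 - x := by
        have := hx.2; linarith [hδpos]
      exact mul_nonneg hc20 (inv_nonneg.2 (pow_nonneg hx1.le 3))
    -- pointwise bound
    have hpt : ∀ x, (N : ℝ) * (d x * F x) ≤ H1 x + H2 x := by
      intro x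
      by_cases hx : x ∈ Set.Ioo (0:ℝ) 1
      · have hψx : 0 ≤ ψ x := hnonneg x ⟨hx.1.le, hx.2⟩
        have h1x : 0 < 1 - x := by linarith [hx.2]
        have hdx : d x = ψ x * (1 - x) := Set.indicator_of_mem hx _
        rw [hdx]
        by_cases hxa : x ≤ a
        · have hH1x : H1 x = c1 * ψ x := Set.indicator_of_mem (Set.mem_Ioc.mpr ⟨hx.1, hxa⟩) _
          have hg0 : 0 ≤ g x := by
            rw [hg]
            exact div_nonneg (mul_nonneg hlam.le (by linarith [hx.1]))
              (mul_nonneg (Nat.cast_nonneg N) (sq_nonneg _))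
          have hg_le : g x ≤ 2 * lam / (N * (1 - a) ^ 2) := by
            rw [hg]
            refine div_le_div₀ (by linarith)
              (by nlinarith [mul_nonneg hlam.le (show (0:ℝ) ≤ 1 - x by linarith [hx.2])])
              (mul_pos hNpos (pow_pos ha1' 2)) ?_
            exact mul_le_mul_of_nonneg_left
              (pow_le_pow_left₀ ha1'.le (by linarith) 2) (Nat.cast_nonneg N)
          have hF_le : F x ≤ (2 * lam / (N * (1 - a) ^ 2)) ^ 2 :=
            (hFle x).trans (pow_le_pow_left₀ hg0 hg_le 2)
          have key : (N : ℝ) * (ψ x * (1 - x) * F x) ≤ c1 * ψ x := by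
            have h2 : c1 * ψ x = (N : ℝ) * (ψ x * (2 * lam / (N * (1 - a) ^ 2)) ^ 2) := by
              rw [hc1]; field_simp
              ring
            rw [h2]
            have hb : ψ x * (1 - x) * F x ≤ ψ x * (2 * lam / (N * (1 - a) ^ 2)) ^ 2 := by
              nlinarith [mul_nonneg hψx (sub_nonneg.2 hF_le),
                mul_nonneg (mul_nonneg hψx (hF0 x)) hx.1.le]
            exact mul_le_mul_of_nonneg_left hb (Nat.cast_nonneg N)
          calc (N : ℝ) * (ψ x * (1 - x) * F x) ≤ c1 * ψ x := key
            _ = H1 x := hH1x.symm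
            _ ≤ H1 x + H2 x := le_add_of_nonneg_right (hH20 x)
        · push_neg at hxa
          have hH1x : H1 x = 0 :=
            Set.indicator_of_notMem (fun h => absurd h.2 (not_le.2 hxa)) _
          by_cases hgε : g x ≤ ε
          · have hFx : F x = (g x) ^ 2 := Set.indicator_of_mem (show x ∈ {x | g x ≤ ε} from hgε) _
            have hden : (0:ℝ) < N * (1 - x) ^ 2 := mul_pos hNpos (pow_pos h1x 2)
            have hkey : lam / (N * ε) ≤ (1 - x) ^ 2 := by
              rw [div_le_iff₀ (mul_pos hNpos hε)]
              have h3 : lam * (1 + x) ≤ ε * (N * (1 - x) ^ 2) := by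
                have := hgε
                rw [hg] at this
                exact (div_le_iff₀ hden).mp this
              nlinarith [h3, mul_pos hlam hx.1]
            have hδle : δ ≤ 1 - x := by
              rw [hδ]
              calc Real.sqrt (lam / (N * ε)) ≤ Real.sqrt ((1 - x) ^ 2) :=
                    Real.sqrt_le_sqrt hkey
                _ = 1 - x := Real.sqrt_sq h1x.le
            have hxmem : x ∈ Set.Ioc a (1 - δ) := ⟨hxa, by linarith⟩
            have hH2x : H2 x = c2 * ((1 - x) ^ 3)⁻¹ := Set.indicator_of_mem hxmem _
            have hψle : ψ x ≤ ψ₁ + 1 := haψ x hxa hx.2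
            have h4 : (1 + x) ^ 2 ≤ 4 := by
              nlinarith [mul_pos (show (0:ℝ) < 1 - x by linarith [hx.2])
                (show (0:ℝ) < 3 + x by linarith [hx.1])]
            have heq : (N : ℝ) * (ψ x * (1 - x) * F x)
                = ψ x * ((1 + x) ^ 2 * (lam ^ 2 / N * ((1 - x) ^ 3)⁻¹)) := by
              rw [hFx, hg]
              field_simp
            have hT : 0 ≤ lam ^ 2 / (N:ℝ) * ((1 - x) ^ 3)⁻¹ :=
              mul_nonneg (by positivity) (inv_nonneg.2 (pow_nonneg h1x.le 3))
            have hle : ψ x * ((1 + x) ^ 2 * (lam ^ 2 / N * ((1 - x) ^ 3)⁻¹))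
                ≤ (ψ₁ + 1) * (4 * (lam ^ 2 / N * ((1 - x) ^ 3)⁻¹)) := by
              nlinarith [mul_nonneg hT (sub_nonneg.2 hψle),
                mul_nonneg (mul_nonneg hψx hT) (sub_nonneg.2 h4)]
            have heq2 : (ψ₁ + 1) * (4 * (lam ^ 2 / N * ((1 - x) ^ 3)⁻¹))
                = c2 * ((1 - x) ^ 3)⁻¹ := by rw [hc2]; ring
            rw [heq, hH1x, hH2x]
            linarith
          · have hFx : F x = 0 := Set.indicator_of_notMem (show x ∉ {x | g x ≤ ε} from hgε) _
            rw [hFx]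
            simp only [mul_zero, zero_mul]
            exact add_nonneg (hH10 x) (hH20 x)
      · have hdx : d x = 0 := Set.indicator_of_notMem hx _
        rw [hdx]
        simp only [zero_mul, mul_zero]
        exact add_nonneg (hH10 x) (hH20 x)
    -- integrability of dominating functions
    have hsub1 : Set.Ioc (0:ℝ) a ⊆ Set.Ico (0:ℝ) 1 :=
      fun x hx => ⟨hx.1.le, lt_of_le_of_lt hx.2 ha1⟩
    have hH1int : Integrable H1 := by
      rw [hH1, integrable_indicator_iff measurableSet_Ioc]
      exact (hint.mono_set hsub1).const_mul c1
    have hH2int : Integrable H2 := by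
      rw [hH2, integrable_indicator_iff measurableSet_Ioc]
      rcases le_or_gt (1 - δ) a with h | h
      · rw [Set.Ioc_eq_empty (not_lt.2 h)]
        exact integrableOn_empty
      · refine ((ContinuousOn.integrableOn_Icc ?_).mono_set Set.Ioc_subset_Icc_self)
        refine continuousOn_const.mul (ContinuousOn.inv₀
          ((continuous_const.sub continuous_id).pow 3).continuousOn ?_)
        intro x hx
        have hx1 : 0 < 1 - x := by
          simp only [Set.mem_Icc] at hx
          linarith [hx.2, hδpos]
        exact ne_of_gt (pow_pos hx1 3)
    -- integral bounds
    have hbound1 : ∫ x, H1 x ≤ C1 / N := by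
      rw [hH1, integral_indicator measurableSet_Ioc, integral_const_mul]
      have h5 : ∫ x in Set.Ioc (0:ℝ) a, ψ x ≤ Iψ := by
        rw [hIψ]
        refine setIntegral_mono_set hint ?_ hsub1.eventuallyLE
        exact (ae_restrict_iff' measurableSet_Ico).2 (ae_of_all _ hnonneg)
      have h6 : C1 / N = c1 * Iψ := by
        rw [hC1, hc1]; field_simp
      rw [h6]
      exact mul_le_mul_of_nonneg_left h5 hc10
    have hbound2 : ∫ x, H2 x ≤ C2 * ε := by
      rw [hH2, integral_indicator measurableSet_Ioc, integral_const_mul]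
      rcases le_or_gt (1 - δ) a with h | h
      · rw [Set.Ioc_eq_empty (not_lt.2 h)]
        simp only [Measure.restrict_empty, integral_zero_measure, mul_zero]
        exact mul_nonneg hC20.le hε.le
      · have hab : a ≤ 1 - δ := h.le
        have hcont : ContinuousOn (fun x => ((1 - x) ^ 3)⁻¹) (Set.Icc a (1 - δ)) := by
          refine ContinuousOn.inv₀
            ((continuous_const.sub continuous_id).pow 3).continuousOn ?_
          intro x hx
          have hx1 : 0 < 1 - x := by
            simp only [Set.mem_Icc] at hx
            linarith [hx.2, hδpos]
          exact ne_of_gt (pow_pos hx1 3)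
        have hderiv : ∀ x ∈ Set.uIcc a (1 - δ),
            HasDerivAt (fun y => (1 - y) ^ (-2 : ℤ) / 2) (((1 - x) ^ 3)⁻¹) x := by
          intro x hx
          rw [Set.uIcc_of_le hab] at hx
          have hne : (1 - x) ≠ 0 := by
            have hx1 : 0 < 1 - x := by
              simp only [Set.mem_Icc] at hx
              linarith [hx.2, hδpos]
            exact hx1.ne'
          have h0 : HasDerivAt (fun y : ℝ => 1 - y) (-1) x := by
            simpa using (hasDerivAt_id x).const_sub 1
          have h1 : HasDerivAt (fun y : ℝ => (1 - y) ^ (-2 : ℤ))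
              (((-2 : ℤ) : ℝ) * (1 - x) ^ (-2 - 1 : ℤ) * (-1)) x :=
            (hasDerivAt_zpow (-2) (1 - x) (Or.inl hne)).comp x h0
          have h2 : HasDerivAt (fun y : ℝ => (1 - y) ^ (-2 : ℤ) / 2)
              (((-2 : ℤ) : ℝ) * (1 - x) ^ (-2 - 1 : ℤ) * (-1) / 2) x := h1.div_const 2
          have h3 : (((-2 : ℤ) : ℝ) * (1 - x) ^ (-2 - 1 : ℤ) * (-1) / 2)
              = ((1 - x) ^ 3)⁻¹ := by
            rw [show (-2 - 1 : ℤ) = -((3:ℕ) : ℤ) by norm_num, zpow_neg, zpow_natCast]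
            push_cast
            ring
          exact h3 ▸ h2
        have hii : IntervalIntegrable (fun x => ((1 - x) ^ 3)⁻¹) volume a (1 - δ) := by
          refine ContinuousOn.intervalIntegrable ?_
          rw [Set.uIcc_of_le hab]
          exact hcont
        have hval : ∫ x in Set.Ioc a (1 - δ), ((1 - x) ^ 3)⁻¹
            = (1 - (1 - δ)) ^ (-2 : ℤ) / 2 - (1 - a) ^ (-2 : ℤ) / 2 := by
          rw [← intervalIntegral.integral_of_le hab]
          exact intervalIntegral.integral_eq_sub_of_hasDerivAt hderiv hii
        have hδval : (1 - (1 - δ)) ^ (-2 : ℤ) = N * ε / lam := by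
          rw [show (1:ℝ) - (1 - δ) = δ by ring,
            show (-2 : ℤ) = -((2:ℕ) : ℤ) by norm_num, zpow_neg, zpow_natCast, hδsq, inv_div]
        have hanneg : 0 ≤ (1 - a) ^ (-2 : ℤ) := by
          rw [show (-2 : ℤ) = -((2:ℕ) : ℤ) by norm_num, zpow_neg, zpow_natCast]
          positivity
        have h7 : ∫ x in Set.Ioc a (1 - δ), ((1 - x) ^ 3)⁻¹ ≤ N * ε / lam / 2 := by
          rw [hval, hδval]; linarith
        have h8 : c2 * ((N:ℝ) * ε / lam / 2) = C2 * ε := by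
          rw [hc2, hC2]; field_simp
          ring
        calc c2 * ∫ x in Set.Ioc a (1 - δ), ((1 - x) ^ 3)⁻¹
            ≤ c2 * ((N:ℝ) * ε / lam / 2) := mul_le_mul_of_nonneg_left h7 hc20
          _ = C2 * ε := h8
    -- conclusion of the main bound
    have hLmeas : AEStronglyMeasurable (fun x => (N : ℝ) * (d x * F x)) volume :=
      ((hdmeas.mul hFmeas.aemeasurable).const_mul _).aestronglyMeasurable
    have hL0 : ∀ x, 0 ≤ (N : ℝ) * (d x * F x) :=
      fun x => mul_nonneg (Nat.cast_nonneg N) (mul_nonneg (hd0 x) (hF0 x))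
    have hLint : Integrable (fun x => (N : ℝ) * (d x * F x)) := by
      refine (hH1int.add hH2int).mono' hLmeas (ae_of_all _ fun x => ?_)
      rw [Real.norm_eq_abs, abs_of_nonneg (hL0 x)]
      exact hpt x
    rw [stepA]
    have h9 : (N : ℝ) * ∫ x, d x * F x = ∫ x, (N : ℝ) * (d x * F x) :=
      (integral_const_mul _ _).symm
    rw [h9]
    calc ∫ x, (N : ℝ) * (d x * F x) ≤ ∫ x, (H1 x + H2 x) :=
          integral_mono hLint (hH1int.add hH2int) hpt
      _ = (∫ x, H1 x) + ∫ x, H2 x := integral_add hH1int hH2int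
      _ ≤ C1 / N + C2 * ε := add_le_add hbound1 hbound2
  -- limsup bounds for fixed ε
  have hlimsup : ∀ ε : ℝ, 0 < ε →
      0 ≤ (Filter.limsup (fun N : ℕ =>
          (N : ℝ) * ∫ ω, ({ω | X N ω ≤ ε}.indicator (fun ω => (X N ω) ^ 2)) ω ∂ℙ) atTop) ∧
      (Filter.limsup (fun N : ℕ =>
          (N : ℝ) * ∫ ω, ({ω | X N ω ≤ ε}.indicator (fun ω => (X N ω) ^ 2)) ω ∂ℙ) atTop)
        ≤ C2 * ε := by
    intro ε hε
    have hub : (fun N : ℕ =>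
        (N : ℝ) * ∫ ω, ({ω | X N ω ≤ ε}.indicator (fun ω => (X N ω) ^ 2)) ω ∂ℙ)
        ≤ᶠ[atTop] fun N : ℕ => C1 / N + C2 * ε :=
      eventually_atTop.2 ⟨1, fun N hN => hmain ε hε N hN⟩
    have hv : Tendsto (fun N : ℕ => C1 / (N:ℝ) + C2 * ε) atTop (nhds (C2 * ε)) := by
      have h := (tendsto_const_div_atTop_nhds_zero_nat C1).add
        (tendsto_const_nhds (x := C2 * ε) (f := atTop (α := ℕ)))
      simpa using h
    have hbv : IsBoundedUnder (· ≤ ·) atTop (fun N : ℕ => C1 / (N:ℝ) + C2 * ε) :=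
      hv.isBoundedUnder_le
    have hcb : IsCoboundedUnder (· ≤ ·) atTop (fun N : ℕ =>
        (N : ℝ) * ∫ ω, ({ω | X N ω ≤ ε}.indicator (fun ω => (X N ω) ^ 2)) ω ∂ℙ) :=
      isCoboundedUnder_le_of_eventually_le atTop (Eventually.of_forall fun N => hnn ε N)
    have h1 : (Filter.limsup (fun N : ℕ =>
        (N : ℝ) * ∫ ω, ({ω | X N ω ≤ ε}.indicator (fun ω => (X N ω) ^ 2)) ω ∂ℙ) atTop)
        ≤ C2 * ε := by
      have h2 := Filter.limsup_le_limsup hub hcb hbv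
      rwa [hv.limsup_eq] at h2
    have hbu : IsBoundedUnder (· ≤ ·) atTop (fun N : ℕ =>
        (N : ℝ) * ∫ ω, ({ω | X N ω ≤ ε}.indicator (fun ω => (X N ω) ^ 2)) ω ∂ℙ) :=
      hbv.mono_le hub
    have h0 : 0 ≤ (Filter.limsup (fun N : ℕ =>
        (N : ℝ) * ∫ ω, ({ω | X N ω ≤ ε}.indicator (fun ω => (X N ω) ^ 2)) ω ∂ℙ) atTop) :=
      le_limsup_of_frequently_le (Frequently.of_forall fun N => hnn ε N) hbu
    exact ⟨h0, h1⟩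
  -- squeeze
  have htC2 : Tendsto (fun ε : ℝ => C2 * ε) (nhdsWithin 0 (Set.Ioi 0)) (nhds 0) := by
    have h : Continuous fun ε : ℝ => C2 * ε := continuous_const.mul continuous_id
    have h2 := h.tendsto 0
    rw [mul_zero] at h2
    exact h2.mono_left nhdsWithin_le_nhds
  refine tendsto_of_tendsto_of_tendsto_of_le_of_le' tendsto_const_nhds htC2 ?_ ?_
  · filter_upwards [self_mem_nhdsWithin] with ε hε
    exact (hlimsup ε hε).1
  · filter_upwards [self_mem_nhdsWithin] with ε hε
    exact (hlimsup ε hε).2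
end

section
/- Let ψ : [0,1) → [0,∞) be integrable with lim_{x↑1} ψ(x) = ψ₁ ∈ (0,∞), let λ > 0, and let h̃(λ, N) = (1/4 + √(1/16 + N/(2λ)))^{−1}. Define J_N^{(3)} = ∫_0^{1−h̃(λ,N)} ((1+a)/(1−a)) (ψ₁ − ψ(a)) da. Then J_N^{(3)} / log N → 0 as N → ∞. -/
open Filter MeasureTheory intervalIntegral

noncomputable def htilde (lam x : ℝ) : ℝ :=
  (1 / 4 + Real.sqrt (1 / 16 + x / (2 * lam)))⁻¹

lemma aux_integrable (ψ : ℝ → ℝ) (ψ₁ : ℝ)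
    (hint : IntegrableOn ψ (Set.Ico (0 : ℝ) 1)) {b : ℝ} (hb0 : 0 ≤ b) (hb1 : b < 1) :
    IntervalIntegrable (fun a => ((1 + a) / (1 - a)) * (ψ₁ - ψ a)) volume 0 b := by
  rw [intervalIntegrable_iff_integrableOn_Ioc_of_le hb0]
  have heq : (fun a => ((1 + a) / (1 - a)) * (ψ₁ - ψ a)) =
      fun a => ((1 + a) / (1 - a)) * ψ₁ - ((1 + a) / (1 - a)) * ψ a := by
    funext a; ring
  rw [heq]
  apply Integrable.sub
  · have hc : ContinuousOn (fun a => ((1 + a) / (1 - a)) * ψ₁) (Set.Icc 0 b) := by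
      apply ContinuousOn.mul _ continuousOn_const
      apply ContinuousOn.div (by fun_prop) (by fun_prop)
      intro x hx
      have := hx.2
      intro h
      have : x = 1 := by linarith
      linarith [hx.2, this ▸ hx.2]
    exact (hc.integrableOn_Icc).mono_set Set.Ioc_subset_Icc_self
  · have hψ : IntegrableOn ψ (Set.Ioc 0 b) := by
      apply hint.mono_set
      intro x hx
      exact ⟨le_of_lt hx.1, lt_of_le_of_lt hx.2 hb1⟩
    apply Integrable.bdd_mul (c := (1 + b) / (1 - b)) hψ
    · exact ((measurable_const.add measurable_id).div
        (measurable_const.sub measurable_id)).aestronglyMeasurable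
    · rw [ae_restrict_iff' measurableSet_Ioc]
      filter_upwards with x hx
      have h1 : (0:ℝ) < 1 - b := by linarith
      have h2 : (0:ℝ) < 1 - x := by linarith [hx.2]
      rw [Real.norm_eq_abs, abs_div, abs_of_nonneg (by linarith [hx.1] : (0:ℝ) ≤ 1 + x),
        abs_of_pos h2]
      rw [div_le_div_iff₀ h2 h1]
      nlinarith [hx.1, hx.2]

lemma aux_integral_eq (c u v : ℝ) (hu : u < 1) (hv : v < 1) :
    ∫ a in u..v, c / (1 - a) = c * (Real.log (1 - u) - Real.log (1 - v)) := by
  have key : ∀ a ∈ Set.uIcc u v, HasDerivAt (fun x => -(c * Real.log (1 - x)))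
      (c / (1 - a)) a := by
    intro a ha
    have ha1 : a < 1 := by
      rcases Set.mem_uIcc.mp ha with h | h
      · linarith [h.2]
      · linarith [h.2]
    have hne : (1 : ℝ) - a ≠ 0 := by linarith
    have h1 : HasDerivAt (fun x : ℝ => 1 - x) (-1) a := (hasDerivAt_id a).const_sub 1
    have h2 : HasDerivAt (fun x : ℝ => Real.log (1 - x)) ((1 - a)⁻¹ * (-1)) a :=
      (Real.hasDerivAt_log hne).comp a h1
    have h3 : HasDerivAt (fun x => -(c * Real.log (1 - x))) (-(c * ((1 - a)⁻¹ * -1))) a :=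
      (h2.const_mul c).neg
    convert h3 using 1
    ring
  have hcont : IntervalIntegrable (fun a => c / (1 - a)) volume u v := by
    apply ContinuousOn.intervalIntegrable
    apply ContinuousOn.div continuousOn_const (by fun_prop)
    intro x hx
    have hx1 : x < 1 := by
      rcases Set.mem_uIcc.mp hx with h | h
      · linarith [h.2]
      · linarith [h.2]
    intro h; linarith [h]
  rw [intervalIntegral.integral_eq_sub_of_hasDerivAt key hcont]
  ring

set_option maxHeartbeats 1000000 in
theorem J3_div_log_tendsto_zero (ψ : ℝ → ℝ) (ψ₁ : ℝ) (hψ₁ : 0 < ψ₁)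
    (hnonneg : ∀ x ∈ Set.Ico (0 : ℝ) 1, 0 ≤ ψ x)
    (hint : IntegrableOn ψ (Set.Ico (0 : ℝ) 1))
    (hlim : Tendsto ψ (nhdsWithin 1 (Set.Iio 1)) (nhds ψ₁))
    (lam : ℝ) (hlam : 0 < lam) :
    Tendsto (fun N : ℕ =>
      (∫ a in (0 : ℝ)..(1 - htilde lam N), ((1 + a) / (1 - a)) * (ψ₁ - ψ a))
        / Real.log N) atTop (nhds 0) := by
  rw [NormedAddCommGroup.tendsto_nhds_zero]
  intro ε hε
  set ε' := ε / 16 with hε'def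
  have hε' : 0 < ε' := by positivity
  obtain ⟨δ', hδ'pos, hδ'⟩ := Metric.tendsto_nhdsWithin_nhds.mp hlim ε' hε'
  set δ := min δ' 1 with hδdef
  have hδpos : 0 < δ := lt_min hδ'pos one_pos
  have hδ1 : δ ≤ 1 := min_le_right _ _
  have hδδ' : δ ≤ δ' := min_le_left _ _
  set f := fun a => ((1 + a) / (1 - a)) * (ψ₁ - ψ a) with hfdef
  set C := |∫ a in (0:ℝ)..(1 - δ), f a| with hCdef
  have hnat : Tendsto (fun N : ℕ => (N : ℝ)) atTop atTop := tendsto_natCast_atTop_atTop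
  have hden : Tendsto (fun N : ℕ => 1 / 4 + Real.sqrt (1 / 16 + (N : ℝ) / (2 * lam)))
      atTop atTop := by
    apply tendsto_atTop_add_const_left
    have hsqrt : Tendsto Real.sqrt atTop atTop := by
      apply tendsto_atTop_atTop_of_monotone (fun x y hxy => Real.sqrt_le_sqrt hxy)
      intro b
      exact ⟨b ^ 2, by rw [Real.sqrt_sq_eq_abs]; exact le_abs_self b⟩
    apply hsqrt.comp
    apply tendsto_atTop_add_const_left
    exact (tendsto_id.atTop_div_const (by positivity)).comp hnat
  have htend : Tendsto (fun N : ℕ => htilde lam N) atTop (nhds 0) :=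
    hden.inv_tendsto_atTop
  have hlog : Tendsto (fun N : ℕ => Real.log N) atTop atTop :=
    Real.tendsto_log_atTop.comp hnat
  have E1 : ∀ᶠ N : ℕ in atTop, htilde lam N < δ := htend.eventually_lt_const hδpos
  have E2 : ∀ᶠ N : ℕ in atTop, C < ε / 4 * Real.log N := by
    filter_upwards [hlog.eventually_gt_atTop (C / (ε / 4))] with N hN
    have h4 : (0:ℝ) < ε / 4 := by positivity
    have := (div_lt_iff₀ h4).mp hN
    linarith [this, mul_comm (Real.log N) (ε / 4)]
  have E3 : ∀ᶠ N : ℕ in atTop, (1:ℝ) < Real.log N := hlog.eventually_gt_atTop 1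
  have E4 : ∀ᶠ N : ℕ in atTop, (htilde lam N)⁻¹ ≤ (N : ℝ) ^ 2 := by
    filter_upwards [hnat.eventually_ge_atTop 3, hnat.eventually_ge_atTop (2 * lam)⁻¹]
      with N h3 hl
    have hN0 : (0:ℝ) ≤ N := by linarith
    have hsq : Real.sqrt (1 / 16 + (N : ℝ) / (2 * lam)) ≤ 2 * N := by
      have h1 : (1:ℝ) / 16 + (N : ℝ) / (2 * lam) ≤ (2 * N) ^ 2 := by
        have : (N : ℝ) / (2 * lam) = (N : ℝ) * (2 * lam)⁻¹ := by
          rw [div_eq_mul_inv]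
        rw [this]
        nlinarith [mul_le_mul_of_nonneg_left hl hN0]
      calc Real.sqrt (1 / 16 + (N : ℝ) / (2 * lam)) ≤ Real.sqrt ((2 * N) ^ 2) :=
            Real.sqrt_le_sqrt h1
      _ = 2 * N := Real.sqrt_sq (by linarith)
    rw [htilde, inv_inv]
    nlinarith
  filter_upwards [E1, E2, E3, E4] with N h1 h2 h3 h4
  set h := htilde lam N with hhdef
  have hh0 : 0 < h := by
    rw [hhdef, htilde]
    have := Real.sqrt_nonneg (1 / 16 + (N : ℝ) / (2 * lam))
    positivity
  have hhδ : h < δ := h1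
  have hb0 : (0:ℝ) ≤ 1 - h := by linarith
  have hb1 : 1 - h < 1 := by linarith
  have hd0 : (0:ℝ) ≤ 1 - δ := by linarith
  have hd1 : 1 - δ < 1 := by linarith
  have hdh : 1 - δ ≤ 1 - h := by linarith
  have hlogN : (0:ℝ) < Real.log N := by linarith
  -- integrability
  have hi1 : IntervalIntegrable f volume 0 (1 - δ) := aux_integrable ψ ψ₁ hint hd0 hd1
  have hi2' : IntervalIntegrable f volume 0 (1 - h) := aux_integrable ψ ψ₁ hint hb0 hb1
  have hi2 : IntervalIntegrable f volume (1 - δ) (1 - h) := by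
    apply hi2'.mono_set
    rw [Set.uIcc_of_le hb0, Set.uIcc_of_le hdh]
    intro x hx
    exact ⟨le_trans hd0 hx.1, hx.2⟩
  have hsplit : ∫ a in (0:ℝ)..(1 - h), f a =
      (∫ a in (0:ℝ)..(1 - δ), f a) + ∫ a in (1 - δ)..(1 - h), f a :=
    (intervalIntegral.integral_add_adjacent_intervals hi1 hi2).symm
  -- bound on second piece
  have hboundint : IntervalIntegrable (fun a => 2 * ε' / (1 - a)) volume (1 - δ) (1 - h) := by
    apply ContinuousOn.intervalIntegrable
    apply ContinuousOn.div continuousOn_const (by fun_prop)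
    intro x hx
    have hx1 : x ≤ 1 - h := by
      rcases Set.mem_uIcc.mp hx with hc | hc
      · linarith [hc.2]
      · exact hc.2.trans hdh
    intro hcon; nlinarith
  have hI2 : |∫ a in (1 - δ)..(1 - h), f a| ≤ 2 * ε' * (Real.log δ - Real.log h) := by
    have hptwise : ∀ᵐ t ∂volume.restrict (Set.uIoc (1 - δ) (1 - h)),
        ‖f t‖ ≤ 2 * ε' / (1 - t) := by
      rw [Set.uIoc_of_le hdh, ae_restrict_iff' measurableSet_Ioc]
      filter_upwards with t ht
      have ht1 : t < 1 := by linarith [ht.2]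
      have htpos : (0:ℝ) < 1 - t := by linarith
      have ht0 : (0:ℝ) ≤ t := le_trans hd0 (le_of_lt ht.1)
      have hdist : dist (ψ t) ψ₁ < ε' := by
        apply hδ' (Set.mem_Iio.2 ht1)
        rw [Real.dist_eq, abs_of_nonpos (by linarith)]
        have : 1 - t < δ := by linarith [ht.1]
        linarith
      have habs : |ψ₁ - ψ t| ≤ ε' := by
        rw [abs_sub_comm]
        exact le_of_lt (by rwa [Real.dist_eq] at hdist)
      rw [hfdef, Real.norm_eq_abs, abs_mul, abs_div,
        abs_of_nonneg (by linarith : (0:ℝ) ≤ 1 + t), abs_of_pos htpos]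
      rw [div_mul_eq_mul_div, div_le_div_iff₀ htpos htpos]
      have hq := mul_le_mul_of_nonneg_right habs htpos.le
      have hq0 : 0 ≤ |ψ₁ - ψ t| * (1 - t) := mul_nonneg (abs_nonneg _) htpos.le
      nlinarith [hq, hq0, mul_nonneg htpos.le hq0]
    have := intervalIntegral.norm_integral_le_abs_of_norm_le hptwise hboundint
    rw [Real.norm_eq_abs] at this
    apply this.trans
    have heq : ∫ a in (1 - δ)..(1 - h), 2 * ε' / (1 - a) =
        2 * ε' * (Real.log δ - Real.log h) := by
      rw [aux_integral_eq (2 * ε') (1 - δ) (1 - h) hd1 hb1]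
      ring_nf
    rw [heq, abs_of_nonneg]
    apply mul_nonneg (by positivity)
    have := Real.log_le_log hh0 (le_of_lt hhδ)
    linarith
  -- combine
  have hlogδ : Real.log δ ≤ 0 := Real.log_nonpos (le_of_lt hδpos) hδ1
  have hloginv : Real.log h⁻¹ ≤ 2 * Real.log N := by
    calc Real.log h⁻¹ ≤ Real.log ((N:ℝ) ^ 2) := Real.log_le_log (by positivity) h4
    _ = 2 * Real.log N := by rw [Real.log_pow]; push_cast; ring
  have hloghinv : -Real.log h = Real.log h⁻¹ := (Real.log_inv h).symm
  have hI2' : |∫ a in (1 - δ)..(1 - h), f a| ≤ ε / 4 * Real.log N := by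
    apply hI2.trans
    have : Real.log δ - Real.log h ≤ 2 * Real.log N := by
      have := hloginv
      linarith [hloghinv ▸ this]
    calc 2 * ε' * (Real.log δ - Real.log h) ≤ 2 * ε' * (2 * Real.log N) := by
          apply mul_le_mul_of_nonneg_left this (by positivity)
    _ ≤ ε / 4 * Real.log N := by rw [hε'def]; nlinarith
  have hJ : |∫ a in (0:ℝ)..(1 - h), f a| < ε / 2 * Real.log N := by
    rw [hsplit]
    calc |(∫ a in (0:ℝ)..(1 - δ), f a) + ∫ a in (1 - δ)..(1 - h), f a| ≤
        C + |∫ a in (1 - δ)..(1 - h), f a| := abs_add_le _ _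
    _ < ε / 4 * Real.log N + ε / 4 * Real.log N := by
        apply add_lt_add_of_lt_of_le h2 hI2'
    _ = ε / 2 * Real.log N := by ring
  rw [Real.norm_eq_abs, abs_div, abs_of_pos hlogN, div_lt_iff₀ hlogN]
  calc |∫ a in (0:ℝ)..(1 - h), f a| < ε / 2 * Real.log N := hJ
  _ ≤ ε * Real.log N := by nlinarith
end
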